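/- arXiv:2301.13037 — 11 statements merged into one kernel-verified Lean document; each statement's English description precedes it below -/
import Mathlib

section
/- In a one-sided matching problem with exactly two agents, a mechanism mapping each profile of strict preferences (each agent ranks being matched with the other vs. being single) to one of the two matchings is strategy-proof and efficient if and only if it is either a dictatorship (one fixed agent always gets their top choice) or a unanimity rule (one of the two matchings is the default, and the other is chosen only if both agents prefer it). -/
/- Two agents {0,1}.  A one-sided matching on two agents is an involution on `Fin 2`;
there are exactly two: the identity (both single) and the swap (matched together).
Each agent's strict preference over the two matchings is encoded by the matching
they prefer.  A mechanism maps profiles to matchings. -/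

abbrev Matching2 := {μ : Fin 2 → Fin 2 // Function.Involutive μ}

/-- Efficiency: if both agents prefer the same matching, it is selected. -/
def Eff0 (f : (Fin 2 → Matching2) → Matching2) : Prop :=
  ∀ (P : Fin 2 → Matching2) (m : Matching2), (∀ i, P i = m) → f P = m

/-- Strategy-proofness: no agent can misreport and move the outcome to their
preferred matching when the truthful outcome was not their preferred matching. -/
def SP0 (f : (Fin 2 → Matching2) → Matching2) : Prop :=
  ∀ (P : Fin 2 → Matching2) (i : Fin 2) (m : Matching2),
    ¬ (f (Function.update P i m) = P i ∧ f P ≠ P i)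

/-- Dictatorship: a fixed agent always gets their top choice. -/
def Dict0 (f : (Fin 2 → Matching2) → Matching2) : Prop :=
  ∃ k : Fin 2, ∀ P, f P = P k

/-- Unanimity rule: a default matching `d` is chosen unless both agents prefer the other. -/
def Unan0 (f : (Fin 2 → Matching2) → Matching2) : Prop :=
  ∃ d : Matching2, ∀ P, (f P ≠ d ↔ ∀ i, P i ≠ d)

def MA : Matching2 := ⟨id, fun _ => rfl⟩
def MB : Matching2 := ⟨![1, 0], by intro x; fin_cases x <;> rfl⟩

lemma classify (μ : Matching2) : μ = MA ∨ μ = MB := by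
  obtain ⟨g, hg⟩ := μ
  have h : ∀ g : Fin 2 → Fin 2, Function.Involutive g → g = id ∨ g = ![1, 0] := by
    simp only [Function.Involutive]; decide
  rcases h g hg with h' | h'
  · left; exact Subtype.ext h'
  · right; exact Subtype.ext h'

lemma MAneMB : MA ≠ MB := by
  intro h
  have := congrArg (fun μ : Matching2 => μ.1 0) h
  simp [MA, MB] at this

lemma twoElem {x y z : Matching2} (hx : x ≠ y) (hz : z ≠ y) : x = z := by
  rcases classify x with h | h <;> rcases classify y with h' | h' <;>
    rcases classify z with h'' | h'' <;> subst h <;> subst h' <;> subst h'' <;>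
    first | rfl | exact absurd rfl hx | exact absurd rfl hz

lemma profEq (P : Fin 2 → Matching2) (x y : Matching2) (h0 : P 0 = x) (h1 : P 1 = y) :
    P = ![x, y] := by
  funext i
  fin_cases i <;> simp [h0, h1]

theorem stmt0 (f : (Fin 2 → Matching2) → Matching2) :
    (SP0 f ∧ Eff0 f) ↔ (Dict0 f ∨ Unan0 f) := by
  constructor
  · rintro ⟨_, heff⟩
    have hAA : f ![MA, MA] = MA := heff _ MA (by intro i; fin_cases i <;> rfl)
    have hBB : f ![MB, MB] = MB := heff _ MB (by intro i; fin_cases i <;> rfl)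
    have key : ∀ (P : Fin 2 → Matching2) (x y : Matching2),
        P 0 = x → P 1 = y → f P = f ![x, y] := by
      intro P x y h0 h1; rw [profEq P x y h0 h1]
    rcases classify (f ![MA, MB]) with h1 | h1 <;> rcases classify (f ![MB, MA]) with h2 | h2
    · -- f AB = A, f BA = A : unanimity with default A
      right; refine ⟨MA, fun P => ?_⟩
      rcases classify (P 0) with p0 | p0 <;> rcases classify (P 1) with p1 | p1
      · have : f P = MA := by rw [key P MA MA p0 p1, hAA]
        simp [this, p0, p1]
      · have : f P = MA := by rw [key P MA MB p0 p1, h1]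
        simp [this]
        exact fun h => absurd p0 h
      · have : f P = MA := by rw [key P MB MA p0 p1, h2]
        simp [this]
        exact fun _ => p1
      · have hfp : f P = MB := by rw [key P MB MB p0 p1, hBB]
        simp [hfp, MAneMB.symm]
        simp [p0, p1, MAneMB.symm]
    ·
      left; exact ⟨0, fun P => by
        rcases classify (P 0) with p0 | p0 <;> rcases classify (P 1) with p1 | p1
        · rw [key P MA MA p0 p1, hAA, p0]
        · rw [key P MA MB p0 p1, h1, p0]
        · rw [key P MB MA p0 p1, h2, p0]
        · rw [key P MB MB p0 p1, hBB, p0]⟩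
    · -- f AB = B, f BA = A : dictator 1
      left; exact ⟨1, fun P => by
        rcases classify (P 0) with p0 | p0 <;> rcases classify (P 1) with p1 | p1
        · rw [key P MA MA p0 p1, hAA, p1]
        · rw [key P MA MB p0 p1, h1, p1]
        · rw [key P MB MA p0 p1, h2, p1]
        · rw [key P MB MB p0 p1, hBB, p1]⟩
    · -- f AB = B, f BA = B : unanimity with default B
      right; refine ⟨MB, fun P => ?_⟩
      rcases classify (P 0) with p0 | p0 <;> rcases classify (P 1) with p1 | p1
      · have hfp : f P = MA := by rw [key P MA MA p0 p1, hAA]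
        simp [hfp, MAneMB]
        simp [p0, p1, MAneMB]
      · have : f P = MB := by rw [key P MA MB p0 p1, h1]
        simp [this]
        exact fun _ => p1
      · have : f P = MB := by rw [key P MB MA p0 p1, h2]
        simp [this]
        exact fun h => absurd p0 h
      · have : f P = MB := by rw [key P MB MB p0 p1, hBB]
        simp [this]
        exact fun h => absurd p0 h
  · rintro (⟨k, hk⟩ | ⟨d, hd⟩)
    · constructor
      · rintro P i m ⟨hmis, htruth⟩
        rw [hk] at htruth hmis
        have hik : i ≠ k := fun h => htruth (by rw [h])
        rw [Function.update_of_ne (Ne.symm hik)] at hmis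
        exact htruth hmis
      · intro P m hm
        rw [hk, hm k]
    · constructor
      · rintro P i m ⟨hmis, htruth⟩
        by_cases hpi : P i = d
        · -- f P ≠ P i = d, so by hd every coordinate ≠ d, contradicting P i = d
          exact ((hd P).mp (by rw [← hpi]; exact htruth) i) hpi
        · -- P i ≠ d; f P ≠ P i forces f P = d (two elements)
          have hfd : f P = d := by
            by_contra hne
            exact htruth (twoElem hne hpi)
          -- so some coordinate of P equals d
          have : ¬ ∀ j, P j ≠ d := fun h => ((hd P).mpr h) hfd
          push_neg at this
          obtain ⟨j, hj⟩ := this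
          have hji : j ≠ i := fun h => hpi (h ▸ hj)
          -- f (update P i m) = P i ≠ d, so all coordinates of update ≠ d
          have := (hd (Function.update P i m)).mp (by rw [hmis]; exact hpi) j
          rw [Function.update_of_ne hji] at this
          exact this hj
      · intro P m hm
        by_cases hmd : m = d
        · subst hmd
          by_contra hne
          exact ((hd P).mp hne 0) (hm 0)
        · have : f P ≠ d := (hd P).mpr (fun i => (hm i) ▸ hmd)
          exact twoElem this hmd
end

section
/- Every sequential dictatorship for one-sided matching is efficient and group strategy-proof. -/
/- One-sided matching framework.
Agents: a type `A`.  A matching is an involution `μ : A → A` (a fixed point is a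
single agent).  Each agent `i` has a strict total order over `A`, where `i` itself
represents staying single. -/

abbrev Pref (A : Type) := {r : A → A → Prop // IsStrictTotalOrder A r}
abbrev Profile (A : Type) := A → Pref A
abbrev Matching (A : Type) := {μ : A → A // Function.Involutive μ}

/-- `μ` Pareto dominates `η` at profile `P`. -/
def dominates {A : Type} (P : Profile A) (μ η : A → A) : Prop :=
  (∀ i, μ i = η i ∨ (P i).1 (μ i) (η i)) ∧ ∃ i, (P i).1 (μ i) (η i)

/-- A mechanism is efficient if its output is never Pareto dominated. -/
def Efficient {A : Type} (f : Profile A → Matching A) : Prop :=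
  ∀ P, ¬ ∃ μ : Matching A, dominates P μ.1 (f P).1

/-- Group strategy-proofness: no coalition `S` has a misreport making every member
weakly better off and some member strictly better off. -/
def GroupSP {A : Type} (f : Profile A → Matching A) : Prop :=
  ¬ ∃ (P P' : Profile A) (S : Set A),
      (∀ i, i ∉ S → P' i = P i) ∧
      (∀ i ∈ S, (f P').1 i = (f P).1 i ∨ (P i).1 ((f P').1 i) ((f P).1 i)) ∧
      (∃ i ∈ S, (P i).1 ((f P').1 i) ((f P).1 i))

/-- `b` is the top choice of preference `r`. -/
def TopChoice {A : Type} (r : Pref A) (b : A) : Prop := ∀ c, c ≠ b → r.1 b c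

/- Sequential dictatorships.  A submatching is a partial involution `ν : A → Option A`
(`none` = not yet matched; `ν a = some a` = `a` is single).  At each step, the agent
designated by the picking order `φ` is matched with their most preferred remaining
partner (possibly themself). -/

/-- One step of the sequential-dictatorship algorithm: dictator `d` (unmatched in `ν`)
picks their `(P d)`-best remaining agent `b` (where `b = d` means staying single). -/
def SDStep {A : Type} [DecidableEq A] (P : Profile A) (d : A) (ν ν' : A → Option A) : Prop :=
  ν d = none ∧ ∃ b, ν b = none ∧ (∀ c, ν c = none → c ≠ b → (P d).1 b c) ∧
    ν' = fun a => if a = d then some b else if a = b then some d else ν a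

/-- `f` is a sequential dictatorship: there is a picking order `φ` such that, for every
profile, iterating the dictatorial steps from the empty submatching produces `f P`. -/
def IsSeqDict {A : Type} [DecidableEq A] (f : Profile A → Matching A) : Prop :=
  ∃ φ : (A → Option A) → A, ∀ P : Profile A, ∃ (k : ℕ) (ν : ℕ → (A → Option A)),
    ν 0 = (fun _ => none) ∧
    (∀ i < k, SDStep P (φ (ν i)) (ν i) (ν (i + 1))) ∧
    (∀ a, ν k a = some ((f P).1 a))

section SDProofs

variable {A : Type} [DecidableEq A]

omit [DecidableEq A] in
private lemma pref_asymm (r : Pref A) {x y : A} (h1 : r.1 x y) (h2 : r.1 y x) : False := by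
  haveI := r.2
  exact (irrefl x) (_root_.trans h1 h2)

/-- Once an agent is matched in the run, their partner never changes. -/
private lemma run_mono (P : Profile A) (φ : (A → Option A) → A) (k : ℕ)
    (ν : ℕ → (A → Option A))
    (hstep : ∀ i < k, SDStep P (φ (ν i)) (ν i) (ν (i + 1))) :
    ∀ i j, i ≤ j → j ≤ k → ∀ a x, ν i a = some x → ν j a = some x := by
  intro i j hij hjk a x hx
  induction j, hij using Nat.le_induction with
  | base => exact hx
  | succ n hn ih =>
    have hx' : ν n a = some x := ih (by omega)
    obtain ⟨hd, b, hb, htop, hnext⟩ := hstep n (by omega)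
    have hne : ν n a ≠ none := by rw [hx']; simp
    have h1 : a ≠ φ (ν n) := fun h => hne (h ▸ hd)
    have h2 : a ≠ b := fun h => hne (h ▸ hb)
    rw [hnext]
    simp only [if_neg h1, if_neg h2]
    exact hx'

/-- The intermediate submatchings are partial involutions. -/
private lemma run_inv (P : Profile A) (φ : (A → Option A) → A) (k : ℕ)
    (ν : ℕ → (A → Option A)) (hν0 : ν 0 = fun _ => none)
    (hstep : ∀ i < k, SDStep P (φ (ν i)) (ν i) (ν (i + 1))) :
    ∀ i ≤ k, ∀ a x, ν i a = some x → ν i x = some a := by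
  intro i
  induction i with
  | zero => intro _ a x hx; rw [hν0] at hx; simp at hx
  | succ n ih =>
    intro hk a x hx
    obtain ⟨hd, b, hb, htop, hnext⟩ := hstep n (by omega)
    simp only [hnext] at hx ⊢
    by_cases h1 : a = φ (ν n)
    · rw [if_pos h1] at hx
      have hxb : b = x := by injection hx
      subst hxb
      by_cases hbd : b = φ (ν n) <;> simp [hbd, h1]
    · rw [if_neg h1] at hx
      by_cases h2 : a = b
      · rw [if_pos h2] at hx
        have hxd : φ (ν n) = x := by injection hx
        subst hxd
        simp [h2]
      · rw [if_neg h2] at hx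
        have hinv := ih (by omega) a x hx
        have hxd : x ≠ φ (ν n) := fun h => by rw [h, hd] at hinv; exact nomatch hinv
        have hxb : x ≠ b := fun h => by rw [h, hb] at hinv; exact nomatch hinv
        rw [if_neg hxd, if_neg hxb]
        exact hinv

/-- Any matching weakly improving on the run's outcome agrees with every
intermediate submatching. -/
private lemma run_agree (f : Profile A → Matching A) (P : Profile A)
    (φ : (A → Option A) → A) (k : ℕ) (ν : ℕ → (A → Option A))
    (hν0 : ν 0 = fun _ => none)
    (hstep : ∀ i < k, SDStep P (φ (ν i)) (ν i) (ν (i + 1)))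
    (hend : ∀ a, ν k a = some ((f P).1 a))
    (μ : Matching A)
    (hdom : ∀ a, μ.1 a = (f P).1 a ∨ (P a).1 (μ.1 a) ((f P).1 a)) :
    ∀ i ≤ k, ∀ a x, ν i a = some x → μ.1 a = x := by
  intro i
  induction i with
  | zero => intro _ a x hx; rw [hν0] at hx; simp at hx
  | succ n ih =>
    intro hk a x hx
    obtain ⟨hd, b, hb, htop, hnext⟩ := hstep n (by omega)
    set d := φ (ν n) with hdset
    -- the dictator's final partner is b
    have hfd : (f P).1 d = b := by
      have h1 : ν (n + 1) d = some b := by rw [hnext]; simp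
      have h2 := run_mono P φ k ν hstep (n + 1) k (by omega) le_rfl d b h1
      rw [hend d] at h2
      injection h2
    -- the dictator gets b under μ too
    have hμd : μ.1 d = b := by
      rcases hdom d with h | h
      · rw [h, hfd]
      · exfalso
        rw [hfd] at h
        have hne : μ.1 d ≠ b := fun he => pref_asymm (P d) (he ▸ h) (he ▸ h)
        have hrem : ν n (μ.1 d) = none := by
          by_contra hcon
          obtain ⟨y, hy⟩ := Option.ne_none_iff_exists'.mp hcon
          have h3 := ih (by omega) (μ.1 d) y hy
          have h4 : μ.1 (μ.1 d) = d := μ.2 d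
          rw [h3] at h4
          have h5 := run_inv P φ k ν hν0 hstep n (by omega) _ _ hy
          rw [h4, hd] at h5
          exact nomatch h5
        exact pref_asymm (P d) h (htop (μ.1 d) hrem hne)
    simp only [hnext] at hx
    by_cases h1 : a = d
    · rw [if_pos h1] at hx
      have hbx : b = x := by injection hx
      rw [h1, hμd, hbx]
    · rw [if_neg h1] at hx
      by_cases h2 : a = b
      · rw [if_pos h2] at hx
        have hdx : d = x := by injection hx
        have h4 := μ.2 d
        rw [hμd] at h4
        rw [h2, h4, ← hdx]
      · rw [if_neg h2] at hx
        exact ih (by omega) a x hx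

/-- Every sequential dictatorship is efficient and group strategy-proof. -/
theorem stmt1 {A : Type} [Fintype A] [DecidableEq A]
    (f : Profile A → Matching A) (h : IsSeqDict f) :
    Efficient f ∧ GroupSP f := by
  obtain ⟨φ, hφ⟩ := h
  constructor
  · -- Efficiency
    intro P ⟨μ, ⟨hdom, j, hstr⟩⟩
    obtain ⟨k, ν, hν0, hstep, hend⟩ := hφ P
    have := run_agree f P φ k ν hν0 hstep hend μ hdom k le_rfl j ((f P).1 j) (hend j)
    rw [this] at hstr
    exact pref_asymm (P j) hstr hstr
  · -- Group strategy-proofness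
    rintro ⟨P, P', S, hout, hweak, j, hjS, hstr⟩
    obtain ⟨k, ν, hν0, hstep, hend⟩ := hφ P
    obtain ⟨k', ν', hν0', hstep', hend'⟩ := hφ P'
    -- the two runs coincide step by step
    have key : ∀ t, t ≤ k → t ≤ k' → ν t = ν' t := by
      intro t
      induction t with
      | zero => intro _ _; rw [hν0, hν0']
      | succ n ih =>
        intro hk hk'
        have heq : ν n = ν' n := ih (by omega) (by omega)
        obtain ⟨hd, b, hb, htop, hnext⟩ := hstep n (by omega)
        obtain ⟨hd', b', hb', htop', hnext'⟩ := hstep' n (by omega)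
        rw [← heq] at hd' hb' htop' hnext'
        set d := φ (ν n) with hdset
        -- final partners of d in each run
        have hfd : (f P).1 d = b := by
          have h1 : ν (n + 1) d = some b := by rw [hnext]; simp
          have h2 := run_mono P φ k ν hstep (n + 1) k (by omega) le_rfl d b h1
          rw [hend d] at h2; injection h2
        have hfd' : (f P').1 d = b' := by
          have h1 : ν' (n + 1) d = some b' := by rw [hnext']; simp
          have h2 := run_mono P' φ k' ν' hstep' (n + 1) k' (by omega) le_rfl d b' h1
          rw [hend' d] at h2; injection h2
        have hbb : b' = b := by
          by_cases hdS : d ∈ S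
          · rcases hweak d hdS with hw | hw
            · rw [hfd, hfd'] at hw; exact hw
            · exfalso
              rw [hfd, hfd'] at hw
              have hne : b' ≠ b := fun he => pref_asymm (P d) (he ▸ hw) (he ▸ hw)
              exact pref_asymm (P d) hw (htop b' hb' hne)
          · by_contra hne
            have h1 : (P d).1 b b' := htop b' hb' hne
            have h2 : (P' d).1 b' b := htop' b hb (fun he => hne he.symm)
            rw [hout d hdS] at h2
            exact pref_asymm (P d) h1 h2
        rw [hnext, hnext', hbb, heq]
    -- the runs have the same length
    have hkk : k = k' := by
      by_contra hne
      rcases Nat.lt_or_ge k k' with hlt | hge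
      · have heq : ν k = ν' k := key k le_rfl (by omega)
        obtain ⟨hd', _⟩ := hstep' k hlt
        rw [← heq] at hd'
        rw [hend] at hd'
        exact nomatch hd'
      · have hlt : k' < k := by omega
        have heq : ν k' = ν' k' := key k' (by omega) le_rfl
        obtain ⟨hd, _⟩ := hstep k' hlt
        rw [heq] at hd
        rw [hend'] at hd
        exact nomatch hd
    -- hence the outcomes coincide, contradicting strict improvement
    have hsame : (f P').1 j = (f P).1 j := by
      have h1 := hend j
      have h2 := hend' j
      rw [← hkk, ← key k le_rfl (by omega)] at h2
      rw [h1] at h2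
      injection h2 with h3
      exact h3.symm
    rw [hsame] at hstr
    exact pref_asymm (P j) hstr hstr

end SDProofs
end

section
/- There is no one-sided matching mechanism for three or more agents that is simultaneously individually rational, group strategy-proof, and efficient. -/
/-- Individual rationality: no agent is ever matched to a partner they rank below
staying single. -/
def IndivRational {A : Type} (f : Profile A → Matching A) : Prop :=
  ∀ P i, (f P).1 i = i ∨ (P i).1 ((f P).1 i) i

namespace Impos
variable {A : Type} [DecidableEq A]

def mkPref (ρ : A → ℕ) (h : Function.Injective ρ) : Pref A :=
  ⟨fun x y => ρ x < ρ y,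
   { trichotomous := fun x y => by
       rcases lt_trichotomy (ρ x) (ρ y) with h1 | h1 | h1
       · exact fun h2 _ => absurd h1 h2
       · exact fun _ _ => h h1
       · exact fun _ h3 => absurd h1 h3
     irrefl := fun x => lt_irrefl _
     trans := fun _ _ _ => lt_trans }⟩

lemma mkPref_val (ρ : A → ℕ) (h) (x y : A) :
    (mkPref ρ h).1 x y ↔ ρ x < ρ y := Iff.rfl

def ρ1 (en : A → ℕ) (p x : A) : ℕ := if x = p then 0 else en x + 1
def ρ2 (en : A → ℕ) (p q x : A) : ℕ :=
  if x = p then 0 else if x = q then 1 else en x + 2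
def ρ3 (en : A → ℕ) (p q r x : A) : ℕ :=
  if x = p then 0 else if x = q then 1 else if x = r then 2 else en x + 3

lemma ρ1_inj (en : A → ℕ) (hen : Function.Injective en) (p : A) :
    Function.Injective (ρ1 en p) := by
  intro x y h
  unfold ρ1 at h
  split_ifs at h with h1 h2 h3 <;>
    first
      | omega
      | (exact hen (by omega))
      | (subst_vars; rfl)

lemma ρ2_inj (en : A → ℕ) (hen : Function.Injective en) (p q : A) :
    Function.Injective (ρ2 en p q) := by
  intro x y h
  unfold ρ2 at h
  split_ifs at h with h1 h2 h3 h4 h5 h6 h7 h8 <;>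
    first
      | omega
      | (exact hen (by omega))
      | (subst_vars; rfl)

lemma ρ3_inj (en : A → ℕ) (hen : Function.Injective en) (p q r : A) :
    Function.Injective (ρ3 en p q r) := by
  intro x y h
  unfold ρ3 at h
  split_ifs at h with h1 h2 h3 h4 h5 h6 h7 h8 h9 h10 h11 h12 <;>
    first
      | omega
      | (exact hen (by omega))
      | (subst_vars; rfl)

lemma ρ3_lt_self (en : A → ℕ) (p q r y : A) (hrp : r ≠ p) (hrq : r ≠ q)
    (h : ρ3 en p q r y < ρ3 en p q r r) : y = p ∨ y = q := by
  have h2 : ρ3 en p q r r = 2 := by simp [ρ3, hrp, hrq]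
  rw [h2] at h
  by_cases h1 : y = p
  · exact Or.inl h1
  by_cases h3 : y = q
  · exact Or.inr h3
  exfalso
  by_cases h4 : y = r
  · subst h4; simp [ρ3, hrp, hrq] at h
  · simp only [ρ3, if_neg h1, if_neg h3, if_neg h4] at h; omega

lemma key (en : A → ℕ) (hen : Function.Injective en)
    (f : Profile A → Matching A) (hIR : IndivRational f) (hGSP : GroupSP f)
    (hEff : Efficient f) (i j : A) (hij : i ≠ j) (P : Profile A)
    (Hoth : ∀ x, x ≠ i → x ≠ j → ∀ y, (P x).1 y x → y = i ∨ y = j)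
    (Hi : (P i).1 j ((f P).1 i)) (Hj : (P j).1 i ((f P).1 j)) : False := by
  set P' : Profile A := fun x =>
    if x = i then mkPref (ρ2 en j i) (ρ2_inj en hen j i)
    else if x = j then mkPref (ρ2 en i j) (ρ2_inj en hen i j)
    else P x with hP'def
  have hP'i : P' i = mkPref (ρ2 en j i) (ρ2_inj en hen j i) := by simp [hP'def]
  have hP'j : P' j = mkPref (ρ2 en i j) (ρ2_inj en hen i j) := by
    simp [hP'def, Ne.symm hij]
  have hP'x : ∀ x, x ≠ i → x ≠ j → P' x = P x := by
    intro x h1 h2; simp [hP'def, h1, h2]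
  have hinv := (f P').2
  have hfix : ∀ x, x ≠ i → x ≠ j → (f P').1 x = x := by
    intro x h1 h2
    rcases hIR P' x with h | h
    · exact h
    rw [hP'x x h1 h2] at h
    rcases Hoth x h1 h2 _ h with hy | hy
    · exfalso
      have hx : (f P').1 i = x := by rw [← hy]; exact hinv x
      rcases hIR P' i with h' | h'
      · exact h1 (by rw [← h', hx])
      · rw [hP'i, mkPref_val, hx] at h'
        simp [ρ2, h2, h1, hij] at h'
    · exfalso
      have hx : (f P').1 j = x := by rw [← hy]; exact hinv x
      rcases hIR P' j with h' | h'
      · exact h2 (by rw [← h', hx])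
      · rw [hP'j, mkPref_val, hx] at h'
        simp [ρ2, h1, h2, Ne.symm hij] at h'
  have hB : (f P').1 i = j := by
    rcases hIR P' i with h | h
    · exfalso
      have hj' : (f P').1 j = j := by
        rcases hIR P' j with h' | h'
        · exact h'
        exfalso
        rw [hP'j, mkPref_val] at h'
        by_cases hc : (f P').1 j = i
        · have : (f P').1 i = j := by rw [← hc]; exact hinv j
          exact hij (h.symm.trans this)
        · by_cases hc2 : (f P').1 j = j <;> simp [ρ2, hc, hc2, hij, Ne.symm hij] at h'
      apply hEff P'
      refine ⟨⟨fun x => Equiv.swap i j x, fun x => Equiv.swap_apply_self i j x⟩, ?_, ?_⟩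
      · intro x
        show Equiv.swap i j x = (f P').1 x ∨ (P' x).1 (Equiv.swap i j x) ((f P').1 x)
        by_cases hx1 : x = i
        · subst hx1
          right
          rw [h, Equiv.swap_apply_left, hP'i, mkPref_val]
          simp [ρ2, hij]
        by_cases hx2 : x = j
        · subst hx2
          right
          rw [hj', Equiv.swap_apply_right, hP'j, mkPref_val]
          simp [ρ2, Ne.symm hij]
        · left
          rw [Equiv.swap_apply_of_ne_of_ne hx1 hx2, hfix x hx1 hx2]
      · refine ⟨i, ?_⟩
        show (P' i).1 (Equiv.swap i j i) ((f P').1 i)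
        rw [h, Equiv.swap_apply_left, hP'i, mkPref_val]
        simp [ρ2, hij]
    · rw [hP'i, mkPref_val] at h
      by_cases hc : (f P').1 i = j
      · exact hc
      exfalso
      by_cases hc2 : (f P').1 i = i <;> simp [ρ2, hc, hc2, hij, Ne.symm hij] at h
  have hB' : (f P').1 j = i := by rw [← hB]; exact hinv i
  apply hGSP
  refine ⟨P, P', {i, j}, ?_, ?_, ⟨i, Or.inl rfl, by rw [hB]; exact Hi⟩⟩
  · intro x hx
    simp only [Set.mem_insert_iff, Set.mem_singleton_iff] at hx
    push_neg at hx
    exact hP'x x hx.1 hx.2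
  · intro x hx
    simp only [Set.mem_insert_iff, Set.mem_singleton_iff] at hx
    rcases hx with rfl | rfl
    · exact Or.inr (by rw [hB]; exact Hi)
    · exact Or.inr (by rw [hB']; exact Hj)

end Impos

open Impos in
/-- There is no individually rational, group strategy-proof and efficient one-sided
matching mechanism for three or more agents. -/
theorem stmt3 {A : Type} [Fintype A] [DecidableEq A] (hA : 3 ≤ Fintype.card A) :
    ¬ ∃ f : Profile A → Matching A, IndivRational f ∧ GroupSP f ∧ Efficient f := by
  rintro ⟨f, hIR, hGSP, hEff⟩
  -- three distinct agents
  have e := (Fintype.equivFin A).symm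
  set a : A := e ⟨0, by omega⟩ with hadef
  set b : A := e ⟨1, by omega⟩ with hbdef
  set c : A := e ⟨2, by omega⟩ with hcdef
  have hab : a ≠ b := by
    intro h; have := e.injective h; simp [Fin.ext_iff] at this
  have hac : a ≠ c := by
    intro h; have := e.injective h; simp [Fin.ext_iff] at this
  have hbc : b ≠ c := by
    intro h; have := e.injective h; simp [Fin.ext_iff] at this
  have nba : b ≠ a := Ne.symm hab
  have nca : c ≠ a := Ne.symm hac
  have ncb : c ≠ b := Ne.symm hbc
  set en : A → ℕ := fun x => ((Fintype.equivFin A) x : ℕ) with hendef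
  have hen : Function.Injective en := fun x y h =>
    (Fintype.equivFin A).injective (Fin.val_injective h)
  -- the cyclic profile
  set P : Profile A := fun x =>
    if x = a then mkPref (ρ3 en b c a) (ρ3_inj en hen b c a)
    else if x = b then mkPref (ρ3 en c a b) (ρ3_inj en hen c a b)
    else if x = c then mkPref (ρ3 en a b c) (ρ3_inj en hen a b c)
    else mkPref (ρ1 en x) (ρ1_inj en hen x) with hPdef
  have hPa : P a = mkPref (ρ3 en b c a) (ρ3_inj en hen b c a) := by simp [hPdef]
  have hPb : P b = mkPref (ρ3 en c a b) (ρ3_inj en hen c a b) := by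
    simp [hPdef, Ne.symm hab]
  have hPc : P c = mkPref (ρ3 en a b c) (ρ3_inj en hen a b c) := by
    simp [hPdef, Ne.symm hac, Ne.symm hbc]
  have hPo : ∀ x, x ≠ a → x ≠ b → x ≠ c →
      P x = mkPref (ρ1 en x) (ρ1_inj en hen x) := by
    intro x h1 h2 h3; simp [hPdef, h1, h2, h3]
  set μ : A → A := (f P).1 with hμdef
  have hinv : Function.Involutive μ := (f P).2
  -- agents outside {a,b,c} are single
  have hout : ∀ x, x ≠ a → x ≠ b → x ≠ c → μ x = x := by
    intro x h1 h2 h3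
    rcases hIR P x with h | h
    · exact h
    rw [hPo x h1 h2 h3, mkPref_val] at h
    have h0 : ρ1 en x x = 0 := by simp [ρ1]
    rw [h0] at h
    exact absurd h (Nat.not_lt_zero _)
  -- a, b, c are matched among themselves
  have htri : ∀ x, (x = a ∨ x = b ∨ x = c) → μ x = a ∨ μ x = b ∨ μ x = c := by
    intro x hx
    by_contra hcon
    push_neg at hcon
    obtain ⟨h1, h2, h3⟩ := hcon
    have h4 : μ (μ x) = μ x := hout (μ x) h1 h2 h3
    have h5 : μ x = x := h4.symm.trans (hinv x)
    rcases hx with rfl | rfl | rfl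
    · exact h1 h5
    · exact h2 h5
    · exact h3 h5
  -- the "others" hypothesis for `key`, given the third agent k with pref ρ3 p q k
  have Hoth_gen : ∀ (k p q : A), (k = a ∨ k = b ∨ k = c) →
      P k = mkPref (ρ3 en p q k) (ρ3_inj en hen p q k) → k ≠ p → k ≠ q →
      ({a, b, c} : Set A) = {p, q, k} →
      ∀ x, x ≠ p → x ≠ q → ∀ y, (P x).1 y x → y = p ∨ y = q := by
    intro k p q hk hPk hkp hkq hset x h1 h2 y hy
    by_cases hxk : x = k
    · subst hxk
      rw [hPk, mkPref_val] at hy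
      exact ρ3_lt_self en p q x y hkp hkq hy
    · -- x is outside {a,b,c}
      have hxa : x ≠ a ∧ x ≠ b ∧ x ≠ c := by
        have : x ∉ ({a, b, c} : Set A) := by
          rw [hset]
          simp only [Set.mem_insert_iff, Set.mem_singleton_iff]
          push_neg
          exact ⟨h1, h2, hxk⟩
        simp only [Set.mem_insert_iff, Set.mem_singleton_iff] at this
        push_neg at this
        exact this
      rw [hPo x hxa.1 hxa.2.1 hxa.2.2, mkPref_val] at hy
      have h0 : ρ1 en x x = 0 := by simp [ρ1]
      rw [h0] at hy
      exact absurd hy (Nat.not_lt_zero _)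
  -- case analysis on the matching at P
  rcases htri a (Or.inl rfl) with ha | ha | ha
  · -- μ a = a
    rcases htri b (Or.inr (Or.inl rfl)) with hb | hb | hb
    · -- μ b = a ⇒ μ a = b, contradiction
      exact hab (ha.symm.trans (hb ▸ hinv b))
    · -- μ b = b : identity case; pair (a, b), third agent c
      refine key en hen f hIR hGSP hEff a b hab P ?_ ?_ ?_
      · exact Hoth_gen c a b (Or.inr (Or.inr rfl)) hPc (Ne.symm hac) (Ne.symm hbc) rfl
      · rw [hPa, mkPref_val, ← hμdef, ha]
        simp [ρ3, hab, hac, hbc, nba, nca, ncb]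
      · rw [hPb, mkPref_val, ← hμdef, hb]
        simp [ρ3, hab, hac, hbc, nba, nca, ncb]
    · -- μ b = c : pair (c, a), third agent b with pref ρ3 c a b
      have hcb : μ c = b := hb ▸ hinv b
      refine key en hen f hIR hGSP hEff c a (Ne.symm hac) P ?_ ?_ ?_
      · refine Hoth_gen b c a (Or.inr (Or.inl rfl)) hPb hbc nba ?_
        ext x; simp only [Set.mem_insert_iff, Set.mem_singleton_iff]; tauto
      · rw [hPc, mkPref_val, ← hμdef, hcb]
        simp [ρ3, hab, hac, hbc, nba, nca, ncb]
      · rw [hPa, mkPref_val, ← hμdef, ha]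
        simp [ρ3, hab, hac, hbc, nba, nca, ncb]
  · -- μ a = b ⇒ μ b = a, μ c = c : pair (b, c), third agent a
    have hba : μ b = a := ha ▸ hinv a
    have hcc : μ c = c := by
      rcases htri c (Or.inr (Or.inr rfl)) with hc | hc | hc
      · exact absurd (ha.symm.trans (hc ▸ hinv c)) hbc
      · exact absurd (hba.symm.trans (hc ▸ hinv c)) hac
      · exact hc
    refine key en hen f hIR hGSP hEff b c hbc P ?_ ?_ ?_
    · refine Hoth_gen a b c (Or.inl rfl) hPa hab hac ?_
      ext x; simp only [Set.mem_insert_iff, Set.mem_singleton_iff]; tauto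
    · rw [hPb, mkPref_val, ← hμdef, hba]
      simp [ρ3, hab, hac, hbc, nba, nca, ncb]
    · rw [hPc, mkPref_val, ← hμdef, hcc]
      simp [ρ3, hab, hac, hbc, nba, nca, ncb]
  · -- μ a = c ⇒ μ c = a, μ b = b : pair (a, b), third agent c
    have hca : μ c = a := ha ▸ hinv a
    have hbb : μ b = b := by
      rcases htri b (Or.inr (Or.inl rfl)) with hb | hb | hb
      · exact absurd (ha.symm.trans (hb ▸ hinv b)) (Ne.symm hbc)
      · exact hb
      · exact absurd (hca.symm.trans (hb ▸ hinv b)) hab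
    refine key en hen f hIR hGSP hEff a b hab P ?_ ?_ ?_
    · exact Hoth_gen c a b (Or.inr (Or.inr rfl)) hPc (Ne.symm hac) (Ne.symm hbc) rfl
    · rw [hPa, mkPref_val, ← hμdef, ha]
      simp [ρ3, hab, hac, hbc, nba, nca, ncb]
    · rw [hPb, mkPref_val, ← hμdef, hbb]
      simp [ρ3, hab, hac, hbc, nba, nca, ncb]
end

section
/- If f is a group strategy-proof and efficient one-sided matching mechanism on agent set N, and j ∈ N, then the submechanism f^{-j} for agents N∖{j} — defined by evaluating f at any extension of a profile where j top-ranks being single and all other agents bottom-rank j — is well-defined, group strategy-proof and efficient. -/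
/- Submechanisms.  For an agent `j`, a profile for the remaining agents
`{a // a ≠ j}` extends to a profile on all of `A` in which every other agent ranks
`j` last and `j` ranks themself (staying single) first. -/

/-- `P` is an extension of the reduced profile `Q` (for the agents other than `j`):
`P` agrees with `Q` on partners other than `j`, every agent `i ≠ j` ranks `j` last,
and `j` ranks themself first. -/
def ExtendsAt {A : Type} (j : A) (Q : Profile {a : A // a ≠ j}) (P : Profile A) : Prop :=
  (∀ i a b : {a : A // a ≠ j}, (Q i).1 a b ↔ (P i.1).1 a.1 b.1) ∧
  (∀ i, i ≠ j → ∀ a, a ≠ j → (P i).1 a j) ∧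
  (∀ a, a ≠ j → (P j).1 j a)

section Auxiliary

variable {A : Type} [DecidableEq A]

lemma tri_or {α : Type} {r : α → α → Prop} (h : ∀ a b, ¬ r a b → ¬ r b a → a = b)
    (a b : α) : r a b ∨ a = b ∨ r b a := by
  by_cases h1 : r a b
  · exact Or.inl h1
  by_cases h2 : r b a
  · exact Or.inr (Or.inr h2)
  exact Or.inr (Or.inl (h a b h1 h2))

lemma pref_asymm_s4 (r : Pref A) {a b : A} (h : r.1 a b) : ¬ r.1 b a :=
  fun h' => r.2.irrefl a (r.2.trans a b a h h')

/-- Extend a strict order on `A ∖ {j}` to `A` by placing `j` last. -/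
def extRel (j : A) (r : {a : A // a ≠ j} → {a : A // a ≠ j} → Prop) (x y : A) : Prop :=
  if hy : y = j then x ≠ j
  else if hx : x = j then False
  else r ⟨x, hx⟩ ⟨y, hy⟩

lemma extRel_left_ne {j : A} {r : {a : A // a ≠ j} → {a : A // a ≠ j} → Prop} {x y : A}
    (h : extRel j r x y) : x ≠ j := by
  unfold extRel at h
  by_cases hy : y = j
  · simpa [hy] using h
  · by_cases hx : x = j
    · simp [hy, hx] at h
    · exact hx

lemma extRel_right (j : A) (r : {a : A // a ≠ j} → {a : A // a ≠ j} → Prop) {x : A}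
    (hx : x ≠ j) : extRel j r x j := by simp [extRel, hx]

lemma extRel_iff (j : A) (r : {a : A // a ≠ j} → {a : A // a ≠ j} → Prop) {x y : A}
    (hx : x ≠ j) (hy : y ≠ j) : extRel j r x y ↔ r ⟨x, hx⟩ ⟨y, hy⟩ := by
  simp [extRel, hx, hy]

lemma extRel_sto (j : A) (r : {a : A // a ≠ j} → {a : A // a ≠ j} → Prop)
    (hr : IsStrictTotalOrder _ r) : IsStrictTotalOrder A (extRel j r) := by
  refine { trichotomous := ?_, irrefl := ?_, trans := ?_ }
  · intro x y
    intro h1 h2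
    suffices H : _ ∨ x = y ∨ _ by
      rcases H with h | h | h
      exacts [absurd h h1, h, absurd h h2]
    by_cases hx : x = j
    · by_cases hy : y = j
      · exact Or.inr (Or.inl (hx.trans hy.symm))
      · exact Or.inr (Or.inr (by rw [hx]; exact extRel_right j r hy))
    · by_cases hy : y = j
      · exact Or.inl (by rw [hy]; exact extRel_right j r hx)
      · rcases tri_or hr.trichotomous ⟨x, hx⟩ ⟨y, hy⟩ with h | h | h
        · exact Or.inl ((extRel_iff j r hx hy).mpr h)
        · exact Or.inr (Or.inl (congrArg Subtype.val h))
        · exact Or.inr (Or.inr ((extRel_iff j r hy hx).mpr h))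
  · intro x h
    by_cases hx : x = j
    · simp [extRel, hx] at h
    · exact hr.irrefl _ ((extRel_iff j r hx hx).mp h)
  · intro a b c hab hbc
    have ha : a ≠ j := extRel_left_ne hab
    have hb : b ≠ j := extRel_left_ne hbc
    by_cases hc : c = j
    · exact hc ▸ extRel_right j r ha
    · exact (extRel_iff j r ha hc).mpr
        (hr.trans _ _ _ ((extRel_iff j r ha hb).mp hab) ((extRel_iff j r hb hc).mp hbc))

/-- Modify a strict order on `A` so that `j` comes first. -/
def topRel (j : A) (r : A → A → Prop) (x y : A) : Prop :=
  if x = j then y ≠ j else y ≠ j ∧ r x y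

lemma topRel_sto (j : A) (r : A → A → Prop) (hr : IsStrictTotalOrder A r) :
    IsStrictTotalOrder A (topRel j r) := by
  refine { trichotomous := ?_, irrefl := ?_, trans := ?_ }
  · intro x y
    intro h1 h2
    suffices H : _ ∨ x = y ∨ _ by
      rcases H with h | h | h
      exacts [absurd h h1, h, absurd h h2]
    by_cases hx : x = j
    · by_cases hy : y = j
      · exact Or.inr (Or.inl (hx.trans hy.symm))
      · exact Or.inl (by simp [topRel, hx, hy])
    · by_cases hy : y = j
      · exact Or.inr (Or.inr (by simp [topRel, hy, hx]))
      · rcases tri_or hr.trichotomous x y with h | h | h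
        · exact Or.inl (by simp [topRel, hx, hy, h])
        · exact Or.inr (Or.inl h)
        · exact Or.inr (Or.inr (by simp [topRel, hx, hy, h]))
  · intro x h
    by_cases hx : x = j
    · simp [topRel, hx] at h
    · simp only [topRel, if_neg hx] at h
      exact hr.irrefl x h.2
  · intro a b c hab hbc
    have hb : b ≠ j := by
      by_cases ha : a = j
      · simpa [topRel, ha] using hab
      · exact ((by simpa [topRel, ha] using hab : b ≠ j ∧ r a b)).1
    have hbc' : c ≠ j ∧ r b c := by simpa [topRel, hb] using hbc
    by_cases ha : a = j
    · simp [topRel, ha, hbc'.1]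
    · have hab' : b ≠ j ∧ r a b := by simpa [topRel, ha] using hab
      simp only [topRel, if_neg ha]
      exact ⟨hbc'.1, hr.trans a b c hab'.2 hbc'.2⟩

noncomputable def extPref (j : A) (r : Pref {a : A // a ≠ j}) : Pref A :=
  ⟨extRel j r.1, extRel_sto j r.1 r.2⟩

noncomputable def topPref (j : A) : Pref A :=
  ⟨topRel j WellOrderingRel, topRel_sto j _ inferInstance⟩

noncomputable def extProfile (j : A) (Q : Profile {a : A // a ≠ j}) : Profile A :=
  fun i => if h : i = j then topPref j else extPref j (Q ⟨i, h⟩)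

lemma extProfile_extends (j : A) (Q : Profile {a : A // a ≠ j}) :
    ExtendsAt j Q (extProfile j Q) := by
  refine ⟨?_, ?_, ?_⟩
  · intro i a b
    simp only [extProfile, dif_neg i.2]
    exact (extRel_iff j _ a.2 b.2).symm.trans (by rfl)
  · intro i hi a ha
    simp only [extProfile, dif_neg hi]
    exact extRel_right j _ ha
  · intro a ha
    simp only [extProfile, dif_pos rfl]
    show topRel j _ j a
    simp [topRel, ha]

/-- Any two extensions of the same reduced profile agree off `j`. -/
lemma extends_pref_eq {j : A} {Q : Profile {a : A // a ≠ j}} {P P' : Profile A}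
    (h : ExtendsAt j Q P) (h' : ExtendsAt j Q P') : ∀ i, i ≠ j → P' i = P i := by
  intro i hi
  apply Subtype.ext
  funext x y
  apply propext
  by_cases hx : x = j
  · constructor
    · intro hc
      rw [hx] at hc
      by_cases hy : y = j
      · rw [hy] at hc; exact absurd hc ((P' i).2.irrefl j)
      · exact absurd hc (pref_asymm_s4 _ (h'.2.1 i hi y hy))
    · intro hc
      rw [hx] at hc
      by_cases hy : y = j
      · rw [hy] at hc; exact absurd hc ((P i).2.irrefl j)
      · exact absurd hc (pref_asymm_s4 _ (h.2.1 i hi y hy))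
  · by_cases hy : y = j
    · constructor
      · intro _; rw [hy]; exact h.2.1 i hi x hx
      · intro _; rw [hy]; exact h'.2.1 i hi x hx
    · have e1 := h.1 ⟨i, hi⟩ ⟨x, hx⟩ ⟨y, hy⟩
      have e2 := h'.1 ⟨i, hi⟩ ⟨x, hx⟩ ⟨y, hy⟩
      exact Iff.trans e2.symm e1

/-- Efficiency forces `j` to be single at any extension. -/
lemma single_at_ext {j : A} (f : Profile A → Matching A) (hE : Efficient f)
    {Q : Profile {a : A // a ≠ j}} {P : Profile A} (hP : ExtendsAt j Q P) :
    (f P).1 j = j := by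
  by_contra hne
  set i := (f P).1 j with hi_def
  have hij : i ≠ j := hne
  have hfi : (f P).1 i = j := by rw [hi_def, (f P).2 j]
  set μ : A → A := fun x => if x = j ∨ x = i then x else (f P).1 x with hμ
  have hμinv : Function.Involutive μ := by
    intro x
    by_cases h : x = j ∨ x = i
    · simp [hμ, h]
    · push_neg at h
      have h1 : (f P).1 x ≠ j := fun hc => h.2 (by
        have h2 := ((f P).2 x).symm
        rw [hc] at h2
        exact h2.trans hi_def.symm)
      have h2 : (f P).1 x ≠ i := fun hc => h.1 (by
        have h3 := (f P).2 x
        rw [hc] at h3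
        exact h3.symm.trans hfi)
      have hnot : ¬ ((f P).1 x = j ∨ (f P).1 x = i) := by tauto
      simp only [hμ, if_neg (by tauto : ¬ (x = j ∨ x = i)), if_neg hnot]
      exact (f P).2 x
  refine hE P ⟨⟨μ, hμinv⟩, ?_, ⟨j, ?_⟩⟩
  · intro k
    by_cases hk : k = j ∨ k = i
    · rcases hk with hk | hk
      · subst hk
        refine Or.inr ?_
        simp only [hμ, if_pos (Or.inl rfl)]
        exact hP.2.2 _ hij
      · subst hk
        refine Or.inr ?_
        simp only [hμ, if_pos (Or.inr rfl), hfi]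
        exact hP.2.1 i hij i hij
    · exact Or.inl (by simp only [hμ, if_neg hk])
  · simp only [hμ, if_pos (Or.inl rfl)]
    exact hP.2.2 _ hij

/-- Group strategy-proofness implies non-bossiness of `j` (given `j`'s outcome is unchanged). -/
lemma nonbossy {j : A} (f : Profile A → Matching A) (hG : GroupSP f) {P P' : Profile A}
    (hoff : ∀ i, i ≠ j → P' i = P i) (hj : (f P').1 j = (f P).1 j) :
    ∀ i, (f P').1 i = (f P).1 i := by
  intro i
  by_cases hij : i = j
  · subst hij; exact hj
  by_contra hne
  rcases tri_or (P i).2.trichotomous ((f P').1 i) ((f P).1 i) with h | h | h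
  · exact hG ⟨P, P', {j, i}, fun k hk => hoff k (fun hc => hk (by simp [hc])),
      fun k hk => by
        rcases hk with hk | hk
        · exact hk ▸ Or.inl hj
        · simp only [Set.mem_singleton_iff] at hk
          exact hk ▸ Or.inr h,
      ⟨i, by simp, h⟩⟩
  · exact hne h
  · have hPi : P' i = P i := hoff i hij
    exact hG ⟨P', P, {j, i}, fun k hk => (hoff k (fun hc => hk (by simp [hc]))).symm,
      fun k hk => by
        rcases hk with hk | hk
        · exact hk ▸ Or.inl hj.symm
        · simp only [Set.mem_singleton_iff] at hk
          subst hk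
          exact Or.inr (by rw [hPi]; exact h),
      ⟨i, by simp, by rw [hPi]; exact h⟩⟩

/-- The submechanism. -/
noncomputable def subMech (f : Profile A → Matching A) (j : A)
    (h : ∀ Q, (f (extProfile j Q)).1 j = j) :
    Profile {a : A // a ≠ j} → Matching {a : A // a ≠ j} :=
  fun Q => ⟨fun i => ⟨(f (extProfile j Q)).1 i.1, fun heq => i.2 (by
      have hinv := (f (extProfile j Q)).2 i.1
      rw [heq, h Q] at hinv
      exact hinv.symm)⟩, fun i => Subtype.ext ((f (extProfile j Q)).2 i.1)⟩

end Auxiliary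

/-- If `f` is group strategy-proof and efficient, then the submechanism `f^{-j}` is
well-defined (there is a mechanism `g` on `A ∖ {j}` whose value depends only on the
reduced profile, agreeing with `f` at every extension), group strategy-proof and
efficient. -/
theorem stmt4 {A : Type} [Fintype A] [DecidableEq A]
    (f : Profile A → Matching A) (hG : GroupSP f) (hE : Efficient f) (j : A) :
    ∃ g : Profile {a : A // a ≠ j} → Matching {a : A // a ≠ j},
      (∀ (Q : Profile {a : A // a ≠ j}) (P : Profile A), ExtendsAt j Q P →
        ∀ i : {a : A // a ≠ j}, ((g Q).1 i).1 = (f P).1 i.1) ∧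
      GroupSP g ∧ Efficient g := by
  classical
  have hcanon : ∀ Q : Profile {a : A // a ≠ j}, (f (extProfile j Q)).1 j = j :=
    fun Q => single_at_ext f hE (extProfile_extends j Q)
  refine ⟨subMech f j hcanon, ?_, ?_, ?_⟩
  · -- agreement with f at every extension
    intro Q P hP i
    show (f (extProfile j Q)).1 i.1 = (f P).1 i.1
    refine nonbossy f hG (extends_pref_eq hP (extProfile_extends j Q)) ?_ i.1
    rw [hcanon Q, single_at_ext f hE hP]
  · -- group strategy-proofness
    rintro ⟨Q, Q', S, hoff, hweak, i0, hi0, hstr⟩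
    refine hG ⟨extProfile j Q, extProfile j Q', Subtype.val '' S, ?_, ?_, ?_⟩
    · intro k hk
      by_cases hkj : k = j
      · subst hkj; simp [extProfile]
      · have hmem : (⟨k, hkj⟩ : {a : A // a ≠ j}) ∉ S := fun hm => hk ⟨_, hm, rfl⟩
        simp only [extProfile, dif_neg hkj]
        rw [hoff _ hmem]
    · rintro k ⟨i, hiS, rfl⟩
      rcases hweak i hiS with h | h
      · exact Or.inl (congrArg Subtype.val h)
      · exact Or.inr (((extProfile_extends j Q).1 i _ _).mp h)
    · exact ⟨i0.1, ⟨i0, hi0, rfl⟩, ((extProfile_extends j Q).1 i0 _ _).mp hstr⟩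
  · -- efficiency
    rintro Q ⟨μ', hdom1, i1, hstr⟩
    refine hE (extProfile j Q)
      ⟨⟨fun x => if h : x = j then j else (μ'.1 ⟨x, h⟩).1, ?_⟩, ?_, ⟨i1.1, ?_⟩⟩
    · intro x
      by_cases h : x = j
      · simp [h]
      · simp only [dif_neg h, dif_neg (μ'.1 ⟨x, h⟩).2]
        exact congrArg Subtype.val (μ'.2 ⟨x, h⟩)
    · intro k
      by_cases hk : k = j
      · subst hk
        exact Or.inl (by simp [hcanon Q])
      · rcases hdom1 ⟨k, hk⟩ with h | h
        · exact Or.inl (by simp only [dif_neg hk]; exact congrArg Subtype.val h)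
        · refine Or.inr ?_
          simp only [dif_neg hk]
          exact ((extProfile_extends j Q).1 ⟨k, hk⟩ _ _).mp h
    · simp only [dif_neg i1.2]
      exact ((extProfile_extends j Q).1 i1 _ _).mp hstr
end

section
/- If f is a group strategy-proof efficient one-sided matching mechanism, j an agent, and ≿ a profile at which f leaves j single (f(≿)(j) = j), then f(≿) restricted to N∖{j} agrees with the submechanism f^{-j} applied to the restriction of ≿: f(≿)(i) = f^{-j}(≿)(i) for all i ≠ j. -/
/-- The restriction of a strict preference on `A` to the agents satisfying `p`. -/
def restrictPref {A : Type} (p : A → Prop) (r : Pref A) : Pref {a : A // p a} :=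
  ⟨fun a b => r.1 a.1 b.1, by
    haveI := r.2
    refine { trichotomous := ?_, irrefl := ?_, trans := ?_ }
    · intro a b hab hba
      rcases trichotomous_of r.1 a.1 b.1 with h | h | h
      · exact absurd h hab
      · exact Subtype.ext h
      · exact absurd h hba
    · intro a
      exact irrefl_of r.1 a.1
    · intro a b c hab hbc
      exact trans_of r.1 hab hbc⟩

/-- Move `j` to the bottom of a preference. -/
def moveBot {A : Type} [DecidableEq A] (j : A) (r : Pref A) : Pref A :=
  ⟨fun a b => if b = j then a ≠ j else a ≠ j ∧ r.1 a b, by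
    haveI := r.2
    refine { trichotomous := ?_, irrefl := ?_, trans := ?_ }
    · intro a b hab hba
      by_contra hne
      by_cases ha : a = j <;> by_cases hb : b = j
      · exact hne (ha.trans hb.symm)
      · simp [ha, hb] at hab hba
      · simp [ha, hb] at hab hba
      · rcases trichotomous_of r.1 a b with h | h | h
        · simp [ha, hb, h] at hab
        · exact hne h
        · simp [ha, hb, h] at hba
    · intro a
      by_cases ha : a = j
      · simp [ha]
      · simp only [if_neg ha]
        exact fun h => irrefl_of r.1 a h.2
    · intro a b c hab hbc
      by_cases hc : c = j
      · simp only [if_pos hc] at hbc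
        by_cases hb : b = j
        · exact absurd hb hbc
        · simp only [if_neg hb] at hab
          simp only [if_pos hc]
          exact hab.1
      · simp only [if_neg hc] at hbc ⊢
        by_cases hb : b = j
        · exact absurd hb hbc.1.elim
        · simp only [if_neg hb] at hab
          exact ⟨hab.1, trans_of r.1 hab.2 hbc.2⟩⟩

/-- Move `j` to the top of a preference. -/
def moveTop {A : Type} [DecidableEq A] (j : A) (r : Pref A) : Pref A :=
  ⟨fun a b => if a = j then b ≠ j else b ≠ j ∧ r.1 a b, by
    haveI := r.2
    refine { trichotomous := ?_, irrefl := ?_, trans := ?_ }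
    · intro a b hab hba
      by_contra hne
      by_cases ha : a = j <;> by_cases hb : b = j
      · exact hne (ha.trans hb.symm)
      · simp [ha, hb] at hab hba
      · simp [ha, hb] at hab hba
      · rcases trichotomous_of r.1 a b with h | h | h
        · simp [ha, hb, h] at hab
        · exact hne h
        · simp [ha, hb, h] at hba
    · intro a
      by_cases ha : a = j
      · simp [ha]
      · simp only [if_neg ha]
        exact fun h => irrefl_of r.1 a h.2
    · intro a b c hab hbc
      by_cases ha : a = j
      · simp only [if_pos ha] at hab ⊢
        by_cases hb : b = j
        · exact absurd hb hab
        · simp only [if_neg hb] at hbc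
          exact hbc.1
      · simp only [if_neg ha] at hab ⊢
        by_cases hb : b = j
        · exact absurd hb hab.1.elim
        · simp only [if_neg hb] at hbc
          exact ⟨hbc.1, trans_of r.1 hab.2 hbc.2⟩⟩

/-- Individual strategy-proofness from group strategy-proofness. -/
lemma sp_of_groupSP {A : Type} {f : Profile A → Matching A} (hG : GroupSP f)
    (R R' : Profile A) (i : A) (hd : ∀ k, k ≠ i → R' k = R k) :
    ¬ (R i).1 ((f R').1 i) ((f R).1 i) := by
  intro h
  apply hG
  refine ⟨R, R', {i}, ?_, ?_, ⟨i, rfl, h⟩⟩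
  · intro k hk
    exact hd k (by simpa using hk)
  · intro k hk
    have : k = i := by simpa using hk
    subst this
    exact Or.inr h

/-- Non-bossiness from group strategy-proofness. -/
lemma nonbossy_of_groupSP {A : Type} {f : Profile A → Matching A} (hG : GroupSP f)
    (R R' : Profile A) (i : A) (hd : ∀ k, k ≠ i → R' k = R k)
    (hi : (f R').1 i = (f R).1 i) : ∀ k, (f R').1 k = (f R).1 k := by
  by_contra hc
  push_neg at hc
  obtain ⟨k, hk⟩ := hc
  have hki : k ≠ i := fun h => hk (h ▸ hi)
  by_cases hstrict : ∃ m, (R m).1 ((f R').1 m) ((f R).1 m)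
  · apply hG
    refine ⟨R, R', {m | (R m).1 ((f R').1 m) ((f R).1 m)} ∪ {i}, ?_, ?_, ?_⟩
    · intro m hm
      exact hd m (fun h => hm (Or.inr h))
    · intro m hm
      rcases hm with h | h
      · exact Or.inr h
      · have : m = i := h
        subst this
        exact Or.inl hi
    · obtain ⟨m, hm⟩ := hstrict
      exact ⟨m, Or.inl hm, hm⟩
  · push_neg at hstrict
    apply hG
    refine ⟨R', R, {m | (R' m).1 ((f R).1 m) ((f R').1 m)} ∪ {i}, ?_, ?_, ?_⟩
    · intro m hm
      exact (hd m (fun h => hm (Or.inr h))).symm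
    · intro m hm
      rcases hm with h | h
      · exact Or.inr h
      · have : m = i := h
        subst this
        exact Or.inl hi.symm
    · have hRk : R' k = R k := hd k hki
      haveI := (R k).2
      have htri := trichotomous_of (R k).1 ((f R').1 k) ((f R).1 k)
      have hstrictk : (R k).1 ((f R).1 k) ((f R').1 k) := by
        rcases htri with h | h | h
        · exact absurd h (hstrict k)
        · exact absurd h hk
        · exact h
      have : (R' k).1 ((f R).1 k) ((f R').1 k) := hRk ▸ hstrictk
      exact ⟨k, Or.inl this, this⟩

/-- If `f` is group strategy-proof and efficient and leaves `j` single at `P`, then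
`f P` agrees on `A ∖ {j}` with the submechanism `f^{-j}` applied to the restriction
of `P`. -/
theorem stmt5 {A : Type} [Fintype A] [DecidableEq A]
    (f : Profile A → Matching A) (hG : GroupSP f) (hE : Efficient f) (j : A)
    (g : Profile {a : A // a ≠ j} → Matching {a : A // a ≠ j})
    (hg : ∀ (Q : Profile {a : A // a ≠ j}) (P : Profile A), ExtendsAt j Q P →
      ∀ i : {a : A // a ≠ j}, ((g Q).1 i).1 = (f P).1 i.1)
    (P : Profile A) (hPj : (f P).1 j = j) :
    ∀ (i : A) (hi : i ≠ j),
      ((g (fun i => restrictPref (· ≠ j) (P i.1))).1 ⟨i, hi⟩).1 = (f P).1 i := by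
  classical
  set P' : Profile A := fun i => if i = j then moveTop j (P j) else moveBot j (P i) with hP'def
  have hPne : ∀ i : A, i ≠ j → (f P).1 i ≠ j := by
    intro i hij hcon
    apply hij
    have := (f P).2 i
    rw [hcon, hPj] at this
    exact this.symm
  -- the chain argument: switching any finite set of agents to P' does not change the outcome
  have key : ∀ S : Finset A, ∀ k, (f (fun m => if m ∈ S then P' m else P m)).1 k = (f P).1 k := by
    intro S
    induction S using Finset.induction_on with
    | empty => simp
    | @insert i S hiS ih =>
      set R : Profile A := fun m => if m ∈ S then P' m else P m with hR
      set R' : Profile A := fun m => if m ∈ insert i S then P' m else P m with hR'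
      have hd : ∀ k, k ≠ i → R' k = R k := by
        intro k hk
        simp only [hR, hR', Finset.mem_insert]
        by_cases h : k ∈ S <;> simp [h, hk]
      have hRi : R i = P i := by simp [hR, hiS]
      have hR'i : R' i = P' i := by simp [hR']
      have hfix : (f R').1 i = (f R).1 i := by
        by_cases hij : i = j
        · subst hij
          have hRj : (f R).1 i = i := by rw [ih i]; exact hPj
          have sp2 := sp_of_groupSP hG R' R i (fun k hk => (hd k hk).symm)
          rw [hRj] at sp2 ⊢
          have hR'j : R' i = moveTop i (P i) := by rw [hR'i, hP'def]; simp
          rw [hR'j] at sp2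
          by_contra hne
          exact sp2 (by simp only [moveTop]; simpa using hne)
        · have hRineq : (f R).1 i ≠ j := by rw [ih i]; exact hPne i hij
          have sp1 := sp_of_groupSP hG R R' i hd
          have sp2 := sp_of_groupSP hG R' R i (fun k hk => (hd k hk).symm)
          rw [hRi] at sp1
          rw [hR'i, hP'def] at sp2
          simp only [if_neg hij] at sp2
          have hR'ineq : (f R').1 i ≠ j := by
            intro hcon
            exact sp2 (by simp [moveBot, hcon, hRineq])
          have sp2' : ¬ (P i).1 ((f R).1 i) ((f R').1 i) := by
            intro h
            exact sp2 (by simp [moveBot, hR'ineq, hRineq, h])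
          haveI := (P i).2
          rcases trichotomous_of (P i).1 ((f R').1 i) ((f R).1 i) with h | h | h
          · exact absurd h sp1
          · exact h
          · exact absurd h sp2'
      intro k
      rw [← ih k]
      exact nonbossy_of_groupSP hG R R' i hd hfix k
  have hunivP' : (fun m => if m ∈ (Finset.univ : Finset A) then P' m else P m) = P' := by
    funext m; simp
  have hfull : ∀ k, (f P').1 k = (f P).1 k := by
    intro k
    have := key Finset.univ k
    rwa [hunivP'] at this
  -- extension property
  have hext : ExtendsAt j (fun i => restrictPref (· ≠ j) (P i.1)) P' := by
    refine ⟨?_, ?_, ?_⟩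
    · intro i a b
      have hi : i.1 ≠ j := i.2
      simp only [hP'def, if_neg hi, restrictPref, moveBot]
      have hb : b.1 ≠ j := b.2
      have ha : a.1 ≠ j := a.2
      simp [hb, ha]
    · intro i hij a ha
      simp only [hP'def, if_neg hij, moveBot]
      simp [ha]
    · intro a ha
      simp only [hP'def, if_pos rfl, moveTop]
      simp [ha]
  intro i hi
  rw [hg _ P' hext ⟨i, hi⟩, hfull i]
end

section
/- For three agents, if f is a group strategy-proof efficient one-sided matching mechanism such that whenever some agent j* top-ranks agent 1 at the two profiles where all agents announce the ranking 1,2,3 or all announce 1,3,2, agent j* is matched to agent 1, then j* owns agent 1: at every profile where j* top-ranks 1, f matches j* with 1. -/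
/-- Agent `a` owns agent `b` if whenever `a` top-ranks `b`, `f` matches `a` with `b`,
regardless of the other agents' preferences. -/
def Owns {A : Type} (f : Profile A → Matching A) (a b : A) : Prop :=
  ∀ P : Profile A, TopChoice (P a) b → (f P).1 a = b

/-- The strict preference induced by a position (ranking) permutation `ρ`:
`a` is preferred to `b` iff `a`'s position `ρ a` is smaller. -/
def prefOfPos {n : ℕ} (ρ : Fin n ≃ Fin n) : Pref (Fin n) :=
  ⟨fun a b => ρ a < ρ b, by
    refine { trichotomous := ?_, irrefl := ?_, trans := ?_ }
    · intro a b hab hba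
      exact ρ.injective (le_antisymm (not_lt.mp hba) (not_lt.mp hab))
    · intro a
      exact lt_irrefl _
    · intro a b c hab hbc
      exact lt_trans hab hbc⟩

/-- The profile where every agent announces the ranking `0 ≻ 1 ≻ 2`. -/
def P12 : Profile (Fin 3) := fun _ => prefOfPos (Equiv.refl (Fin 3))

/-- The profile where every agent announces the ranking `0 ≻ 2 ≻ 1`. -/
def P13 : Profile (Fin 3) := fun _ => prefOfPos (Equiv.swap 1 2)

/- ------------------- auxiliary lemmas ------------------- -/

lemma invol_symm (μ : Matching (Fin 3)) {a b : Fin 3} (h : μ.1 a = b) : μ.1 b = a := by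
  rw [← h]; exact μ.2 a

/-- Individual strategy-proofness consequence: if reporting `s` instead of the true
`P j` (whose top is `0`) yields partner `0`, then truth also yields `0`. -/
lemma pull (f : Profile (Fin 3) → Matching (Fin 3)) (hG : GroupSP f)
    (P : Profile (Fin 3)) (j : Fin 3) (s : Pref (Fin 3))
    (htop : TopChoice (P j) 0)
    (h : (f (Function.update P j s)).1 j = 0) : (f P).1 j = 0 := by
  by_contra hx
  apply hG
  refine ⟨P, Function.update P j s, {j}, ?_, ?_, ⟨j, rfl, ?_⟩⟩
  · intro i hi
    exact Function.update_of_ne (by simpa using hi) _ _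
  · intro i hi
    have hij : i = j := hi
    subst hij
    exact Or.inr (by rw [h]; exact htop _ hx)
  · rw [h]; exact htop _ hx

/-- Main lemma, case `j ≠ 0`: from the two anchor profiles where `j` is matched to
`0`, every profile in which `j` reports `u` matches `j` to `0`. -/
lemma mainNZ (f : Profile (Fin 3) → Matching (Fin 3)) (hG : GroupSP f)
    (j m : Fin 3) (u u' : Pref (Fin 3))
    (hall : ∀ x : Fin 3, x = 0 ∨ x = j ∨ x = m)
    (hj0 : j ≠ 0) (hm0 : m ≠ 0) (hjm : j ≠ m)
    (hu0j : u.1 0 j) (hujm : u.1 j m)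
    (hu'mj : u'.1 m j) (hu'0m : u'.1 0 m)
    (A A' : Profile (Fin 3))
    (hAj : A j = u) (hA0 : A 0 = u) (hAm : A m = u)
    (hA'j : A' j = u) (hA'0 : A' 0 = u') (hA'm : A' m = u')
    (hfA : (f A).1 j = 0) (hfA' : (f A').1 j = 0)
    (Q : Profile (Fin 3)) (hQ : Q j = u) : (f Q).1 j = 0 := by
  have hA0j : (f A).1 0 = j := invol_symm _ hfA
  have hAmm : (f A).1 m = m := by
    rcases hall ((f A).1 m) with h | h | h
    · have h2 := invol_symm _ h
      rw [hA0j] at h2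
      exact absurd h2 hjm
    · have h2 := invol_symm _ h
      rw [hfA] at h2
      exact absurd h2.symm hm0
    · exact h
  have hA'0j : (f A').1 0 = j := invol_symm _ hfA'
  have hA'mm : (f A').1 m = m := by
    rcases hall ((f A').1 m) with h | h | h
    · have h2 := invol_symm _ h
      rw [hA'0j] at h2
      exact absurd h2 hjm
    · have h2 := invol_symm _ h
      rw [hfA'] at h2
      exact absurd h2.symm hm0
    · exact h
  have cond1A : ∀ i, i ∉ ({0, m} : Set (Fin 3)) → Q i = A i := by
    intro i hi
    rcases hall i with rfl | rfl | rfl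
    · exact absurd (Set.mem_insert 0 _) hi
    · exact hQ.trans hAj.symm
    · exact absurd (Set.mem_insert_of_mem _ rfl) hi
  have cond1A' : ∀ i, i ∉ ({0, m} : Set (Fin 3)) → Q i = A' i := by
    intro i hi
    rcases hall i with rfl | rfl | rfl
    · exact absurd (Set.mem_insert 0 _) hi
    · exact hQ.trans hA'j.symm
    · exact absurd (Set.mem_insert_of_mem _ rfl) hi
  rcases hall ((f Q).1 j) with h0 | hjj | hjmm
  · exact h0
  · -- j single at Q
    exfalso
    have hq0j : (f Q).1 0 ≠ j := by
      intro h
      have h2 := invol_symm _ h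
      rw [hjj] at h2
      exact hj0 h2
    rcases hall ((f Q).1 0) with q0 | q0 | q0
    · -- everyone single among 0 and j : μQ m = m too; GSP violation from A
      have hqm : (f Q).1 m = m := by
        rcases hall ((f Q).1 m) with h | h | h
        · have h2 := invol_symm _ h
          rw [q0] at h2
          exact absurd h2 hm0.symm.elim
        · have h2 := invol_symm _ h
          rw [hjj] at h2
          exact absurd h2 hjm
        · exact h
      apply hG
      refine ⟨A, Q, {0, m}, cond1A, ?_, ⟨0, Set.mem_insert 0 _, ?_⟩⟩
      · intro i hi
        rcases Set.mem_insert_iff.mp hi with rfl | hi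
        · exact Or.inr (by rw [q0, hA0j, hA0]; exact hu0j)
        · rw [Set.mem_singleton_iff] at hi; subst hi
          exact Or.inl (by rw [hqm, hAmm])
      · rw [q0, hA0j, hA0]; exact hu0j
    · exact hq0j q0
    · -- 0 matched with m at Q : GSP violation from A'
      have hqm : (f Q).1 m = 0 := invol_symm _ q0
      apply hG
      refine ⟨A', Q, {0, m}, cond1A', ?_, ⟨m, Set.mem_insert_of_mem _ rfl, ?_⟩⟩
      · intro i hi
        rcases Set.mem_insert_iff.mp hi with rfl | hi
        · exact Or.inr (by rw [q0, hA'0j, hA'0]; exact hu'mj)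
        · rw [Set.mem_singleton_iff] at hi; subst hi
          exact Or.inr (by rw [hqm, hA'mm, hA'm]; exact hu'0m)
      · rw [hqm, hA'mm, hA'm]; exact hu'0m
  · -- j matched with m at Q : GSP violation from A
    exfalso
    have hqm : (f Q).1 m = j := invol_symm _ hjmm
    have hq0 : (f Q).1 0 = 0 := by
      rcases hall ((f Q).1 0) with h | h | h
      · exact h
      · have h2 := invol_symm _ h
        rw [hjmm] at h2
        exact absurd h2 hm0
      · have h2 := invol_symm _ h
        rw [hqm] at h2
        exact absurd h2 hj0
    apply hG
    refine ⟨A, Q, {0, m}, cond1A, ?_, ⟨0, Set.mem_insert 0 _, ?_⟩⟩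
    · intro i hi
      rcases Set.mem_insert_iff.mp hi with rfl | hi
      · exact Or.inr (by rw [hq0, hA0j, hA0]; exact hu0j)
      · rw [Set.mem_singleton_iff] at hi; subst hi
        exact Or.inr (by rw [hqm, hAmm, hAm]; exact hujm)
    · rw [hq0, hA0j, hA0]; exact hu0j

/-- Main lemma, case `j = 0`. -/
lemma mainZ (f : Profile (Fin 3) → Matching (Fin 3)) (hG : GroupSP f)
    (a b : Fin 3) (u u' : Pref (Fin 3))
    (hall : ∀ x : Fin 3, x = 0 ∨ x = a ∨ x = b)
    (ha0 : a ≠ 0) (hb0 : b ≠ 0) (hab : a ≠ b)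
    (hu0a : u.1 0 a) (hu0b : u.1 0 b) (huab : u.1 a b)
    (hu'0a : u'.1 0 a) (hu'0b : u'.1 0 b) (hu'ba : u'.1 b a)
    (A A' : Profile (Fin 3))
    (hA0 : A 0 = u) (hAa : A a = u) (hAb : A b = u)
    (hA'0 : A' 0 = u) (hA'a : A' a = u') (hA'b : A' b = u')
    (hfA : (f A).1 0 = 0) (hfA' : (f A').1 0 = 0)
    (Q : Profile (Fin 3)) (hQ : Q 0 = u) : (f Q).1 0 = 0 := by
  have cond1A : ∀ i, i ∉ ({a, b} : Set (Fin 3)) → Q i = A i := by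
    intro i hi
    rcases hall i with rfl | rfl | rfl
    · exact hQ.trans hA0.symm
    · exact absurd (Set.mem_insert _ _) hi
    · exact absurd (Set.mem_insert_of_mem _ rfl) hi
  have cond1A' : ∀ i, i ∉ ({a, b} : Set (Fin 3)) → Q i = A' i := by
    intro i hi
    rcases hall i with rfl | rfl | rfl
    · exact hQ.trans hA'0.symm
    · exact absurd (Set.mem_insert _ _) hi
    · exact absurd (Set.mem_insert_of_mem _ rfl) hi
  have hclassA : ((f A).1 a = a ∧ (f A).1 b = b) ∨ ((f A).1 a = b ∧ (f A).1 b = a) := by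
    rcases hall ((f A).1 a) with h | h | h
    · have h2 := invol_symm _ h
      rw [hfA] at h2
      exact absurd h2 ha0.symm.elim
    · left
      refine ⟨h, ?_⟩
      rcases hall ((f A).1 b) with h' | h' | h'
      · have h2 := invol_symm _ h'
        rw [hfA] at h2
        exact absurd h2 hb0.symm.elim
      · have h2 := invol_symm _ h'
        rw [h] at h2
        exact absurd h2.symm hab.symm.elim
      · exact h'
    · exact Or.inr ⟨h, invol_symm _ h⟩
  have hclassA' : ((f A').1 a = a ∧ (f A').1 b = b) ∨ ((f A').1 a = b ∧ (f A').1 b = a) := by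
    rcases hall ((f A').1 a) with h | h | h
    · have h2 := invol_symm _ h
      rw [hfA'] at h2
      exact absurd h2 ha0.symm.elim
    · left
      refine ⟨h, ?_⟩
      rcases hall ((f A').1 b) with h' | h' | h'
      · have h2 := invol_symm _ h'
        rw [hfA'] at h2
        exact absurd h2 hb0.symm.elim
      · have h2 := invol_symm _ h'
        rw [h] at h2
        exact absurd h2.symm hab.symm.elim
      · exact h'
    · exact Or.inr ⟨h, invol_symm _ h⟩
  rcases hall ((f Q).1 0) with h | h | h
  · exact h
  · -- 0 matched with a at Q
    exfalso
    have hqa : (f Q).1 a = 0 := invol_symm _ h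
    have hqb : (f Q).1 b = b := by
      rcases hall ((f Q).1 b) with h' | h' | h'
      · have h2 := invol_symm _ h'
        rw [h] at h2
        exact absurd h2.symm hab.symm.elim
      · have h2 := invol_symm _ h'
        rw [hqa] at h2
        exact absurd h2 hb0.symm.elim
      · exact h'
    rcases hclassA with ⟨ha1, hb1⟩ | ⟨ha1, hb1⟩
    · -- violation vs A
      apply hG
      refine ⟨A, Q, {a, b}, cond1A, ?_, ⟨a, Set.mem_insert _ _, ?_⟩⟩
      · intro i hi
        rcases Set.mem_insert_iff.mp hi with rfl | hi
        · exact Or.inr (by rw [hqa, ha1, hAa]; exact hu0a)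
        · rw [Set.mem_singleton_iff] at hi; subst hi
          exact Or.inl (by rw [hqb, hb1])
      · rw [hqa, ha1, hAa]; exact hu0a
    · rcases hclassA' with ⟨ha2, hb2⟩ | ⟨ha2, hb2⟩
      · -- violation vs A'
        apply hG
        refine ⟨A', Q, {a, b}, cond1A', ?_, ⟨a, Set.mem_insert _ _, ?_⟩⟩
        · intro i hi
          rcases Set.mem_insert_iff.mp hi with rfl | hi
          · exact Or.inr (by rw [hqa, ha2, hA'a]; exact hu'0a)
          · rw [Set.mem_singleton_iff] at hi; subst hi
            exact Or.inl (by rw [hqb, hb2])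
        · rw [hqa, ha2, hA'a]; exact hu'0a
      · -- violation vs A'
        apply hG
        refine ⟨A', Q, {a, b}, cond1A', ?_, ⟨a, Set.mem_insert _ _, ?_⟩⟩
        · intro i hi
          rcases Set.mem_insert_iff.mp hi with rfl | hi
          · exact Or.inr (by rw [hqa, ha2, hA'a]; exact hu'0b)
          · rw [Set.mem_singleton_iff] at hi; subst hi
            exact Or.inr (by rw [hqb, hb2, hA'b]; exact hu'ba)
        · rw [hqa, ha2, hA'a]; exact hu'0b
  · -- 0 matched with b at Q
    exfalso
    have hqb : (f Q).1 b = 0 := invol_symm _ h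
    have hqa : (f Q).1 a = a := by
      rcases hall ((f Q).1 a) with h' | h' | h'
      · have h2 := invol_symm _ h'
        rw [h] at h2
        exact absurd h2.symm hab.elim
      · exact h'
      · have h2 := invol_symm _ h'
        rw [hqb] at h2
        exact absurd h2 ha0.symm.elim
    rcases hclassA with ⟨ha1, hb1⟩ | ⟨ha1, hb1⟩
    · apply hG
      refine ⟨A, Q, {a, b}, cond1A, ?_, ⟨b, Set.mem_insert_of_mem _ rfl, ?_⟩⟩
      · intro i hi
        rcases Set.mem_insert_iff.mp hi with rfl | hi
        · exact Or.inl (by rw [hqa, ha1])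
        · rw [Set.mem_singleton_iff] at hi; subst hi
          exact Or.inr (by rw [hqb, hb1, hAb]; exact hu0b)
      · rw [hqb, hb1, hAb]; exact hu0b
    · apply hG
      refine ⟨A, Q, {a, b}, cond1A, ?_, ⟨b, Set.mem_insert_of_mem _ rfl, ?_⟩⟩
      · intro i hi
        rcases Set.mem_insert_iff.mp hi with rfl | hi
        · exact Or.inr (by rw [hqa, ha1, hAa]; exact huab)
        · rw [Set.mem_singleton_iff] at hi; subst hi
          exact Or.inr (by rw [hqb, hb1, hAb]; exact hu0a)
      · rw [hqb, hb1, hAb]; exact hu0a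

lemma p12r {a b : Fin 3} (h : a < b) : (P12 0).1 a b := h

lemma p13r {a b : Fin 3} (h : Equiv.swap (1 : Fin 3) 2 a < Equiv.swap (1 : Fin 3) 2 b) :
    (P13 0).1 a b := h

lemma top12 : TopChoice (P12 0) 0 := by
  intro c hc
  exact p12r (Fin.pos_of_ne_zero hc)

lemma top13 : TopChoice (P13 0) 0 := by
  intro c hc
  refine p13r ?_
  have h0 : Equiv.swap (1 : Fin 3) 2 0 = 0 := by decide
  have : Equiv.swap (1 : Fin 3) 2 c ≠ 0 := by
    intro h
    apply hc
    have := congrArg (Equiv.swap (1 : Fin 3) 2) h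
    simpa [h0] using this
  simpa [h0] using Fin.pos_of_ne_zero this

/-- For three agents: if at both uniform profiles `0 ≻ 1 ≻ 2` and `0 ≻ 2 ≻ 1` a
group strategy-proof efficient `f` matches `j` with agent `0`, then `j` owns `0`. -/
theorem stmt7 (f : Profile (Fin 3) → Matching (Fin 3))
    (hG : GroupSP f) (hE : Efficient f) (j : Fin 3)
    (h1 : (f P12).1 j = 0) (h2 : (f P13).1 j = 0) :
    Owns f j 0 := by
  intro P htop
  have hj := (by decide : ∀ x : Fin 3, x = 0 ∨ x = 1 ∨ x = 2) j
  have upd13 : ∀ j : Fin 3, Function.update (Function.update P13 j (P12 0)) j (P13 0) = P13 := by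
    intro j
    funext i
    rcases eq_or_ne i j with rfl | hi
    · rw [Function.update_self]; rfl
    · rw [Function.update_of_ne hi, Function.update_of_ne hi]
  have upd12 : ∀ j : Fin 3, Function.update (Function.update P12 j (P13 0)) j (P12 0) = P12 := by
    intro j
    funext i
    rcases eq_or_ne i j with rfl | hi
    · rw [Function.update_self]; rfl
    · rw [Function.update_of_ne hi, Function.update_of_ne hi]
  rcases hj with rfl | rfl | rfl
  · -- j = 0
    apply pull f hG P 0 (P12 0) htop
    have hfA' : (f (Function.update P13 0 (P12 0))).1 0 = 0 := by
      apply pull f hG _ 0 (P13 0)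
      · rw [Function.update_self]; exact top12
      · rw [upd13 0]; exact h2
    refine mainZ f hG 1 2 (P12 0) (P13 0) (by decide) (by decide) (by decide) (by decide)
      (p12r (by decide)) (p12r (by decide)) (p12r (by decide))
      (p13r (by decide)) (p13r (by decide)) (p13r (by decide))
      P12 (Function.update P13 0 (P12 0)) rfl rfl rfl
      (Function.update_self 0 _ _)
      (Function.update_of_ne (by decide) _ _)
      (Function.update_of_ne (by decide) _ _)
      h1 hfA' _ (Function.update_self 0 _ _)
  · -- j = 1
    apply pull f hG P 1 (P12 0) htop
    have hfA' : (f (Function.update P13 1 (P12 0))).1 1 = 0 := by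
      apply pull f hG _ 1 (P13 0)
      · rw [Function.update_self]; exact top12
      · rw [upd13 1]; exact h2
    refine mainNZ f hG 1 2 (P12 0) (P13 0) (by decide) (by decide) (by decide) (by decide)
      (p12r (by decide)) (p12r (by decide))
      (p13r (by decide)) (p13r (by decide))
      P12 (Function.update P13 1 (P12 0)) rfl rfl rfl
      (Function.update_self 1 _ _)
      (Function.update_of_ne (by decide) _ _)
      (Function.update_of_ne (by decide) _ _)
      h1 hfA' _ (Function.update_self 1 _ _)
  · -- j = 2
    apply pull f hG P 2 (P13 0) htop
    have hfA' : (f (Function.update P12 2 (P13 0))).1 2 = 0 := by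
      apply pull f hG _ 2 (P12 0)
      · rw [Function.update_self]; exact top13
      · rw [upd12 2]; exact h1
    refine mainNZ f hG 2 1 (P13 0) (P12 0) (by decide) (by decide) (by decide) (by decide)
      (p13r (by decide)) (p13r (by decide))
      (p12r (by decide)) (p12r (by decide))
      P13 (Function.update P12 2 (P13 0)) rfl rfl rfl
      (Function.update_self 2 _ _)
      (Function.update_of_ne (by decide) _ _)
      (Function.update_of_ne (by decide) _ _)
      h2 hfA' _ (Function.update_self 2 _ _)
end

section
/- For three agents, there is no group strategy-proof and efficient one-sided matching mechanism under which every agent owns themself, i.e., under which every agent who top-ranks staying single remains single. -/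
/-! ### Auxiliary definitions -/


abbrev mk3 (v : Fin 3 → ℕ) (hv : Function.Injective v) : Pref (Fin 3) :=
  ⟨fun a b => v b < v a,
   { trichotomous := by
       intro a b
       exact fun h1 h2 => hv (le_antisymm (not_lt.mp h1) (not_lt.mp h2))
     irrefl := fun a => lt_irrefl _
     trans := fun a b c h1 h2 => lt_trans h2 h1 }⟩

lemma rel3 (v : Fin 3 → ℕ) (hv : Function.Injective v) (a b : Fin 3)
    (h : v b < v a) : (mk3 v hv).1 a b := h

lemma top3 (v : Fin 3 → ℕ) (hv : Function.Injective v) (b : Fin 3)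
    (h : ∀ c, c ≠ b → v c < v b) : TopChoice (mk3 v hv) b := h

lemma forall_fin3 {p : Fin 3 → Prop} (h0 : p 0) (h1 : p 1) (h2 : p 2) : ∀ i, p i := by
  intro i; fin_cases i <;> assumption

lemma classify3 (μ : Fin 3 → Fin 3) (h : ∀ x, μ (μ x) = x) :
    (μ 0 = 0 ∧ μ 1 = 1 ∧ μ 2 = 2) ∨ (μ 0 = 1 ∧ μ 1 = 0 ∧ μ 2 = 2) ∨
    (μ 0 = 2 ∧ μ 1 = 1 ∧ μ 2 = 0) ∨ (μ 0 = 0 ∧ μ 1 = 2 ∧ μ 2 = 1) := by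
  revert h; revert μ; decide

abbrev m01 : Matching (Fin 3) := ⟨![1,0,2], forall_fin3 rfl rfl rfl⟩
abbrev m02 : Matching (Fin 3) := ⟨![2,1,0], forall_fin3 rfl rfl rfl⟩
abbrev m12 : Matching (Fin 3) := ⟨![0,2,1], forall_fin3 rfl rfl rfl⟩

abbrev cp0 : Pref (Fin 3) := mk3 ![1,3,2] (by decide)
abbrev cp1 : Pref (Fin 3) := mk3 ![2,1,3] (by decide)
abbrev cp2 : Pref (Fin 3) := mk3 ![3,2,1] (by decide)

abbrev cycP : Profile (Fin 3) := ![cp0, cp1, cp2]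

abbrev QA : Profile (Fin 3) := ![cp0, mk3 ![1,2,3] (by decide), mk3 ![1,3,2] (by decide)]
abbrev QB : Profile (Fin 3) := ![mk3 ![2,3,1] (by decide), mk3 ![3,2,1] (by decide), cp2]
abbrev QC : Profile (Fin 3) := ![mk3 ![2,1,3] (by decide), cp1, mk3 ![3,1,2] (by decide)]

lemma notMem1 {a b : Fin 3} (x : Fin 3) (hxa : x ≠ a) (hxb : x ≠ b)
    (h : x ∈ ({a, b} : Set (Fin 3))) : False := by
  rcases Set.mem_insert_iff.mp h with h | h
  · exact hxa h
  · exact hxb (Set.mem_singleton_iff.mp h)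

lemma noWorst (f : Profile (Fin 3) → Matching (Fin 3)) (hG : GroupSP f)
    (hOwn : ∀ i : Fin 3, Owns f i i) (Q : Profile (Fin 3)) (j : Fin 3)
    (s : Pref (Fin 3)) (hts : TopChoice s j)
    (hworse : (Q j).1 j ((f Q).1 j)) : False := by
  have hfix : (f (Function.update Q j s)).1 j = j := by
    apply hOwn j
    rw [Function.update_self]
    exact hts
  apply hG
  refine ⟨Q, Function.update Q j s, {j}, ?_, ?_, ?_⟩
  · intro i hi
    exact Function.update_of_ne (by simpa using hi) _ _
  · intro i hi
    rw [Set.mem_singleton_iff] at hi; subst hi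
    exact Or.inr (by rw [hfix]; exact hworse)
  · exact ⟨j, rfl, by rw [hfix]; exact hworse⟩

/-- For three agents, no group strategy-proof and efficient mechanism lets every
agent own themself (i.e. every agent who top-ranks staying single stays single). -/
theorem stmt9 (f : Profile (Fin 3) → Matching (Fin 3))
    (hG : GroupSP f) (hE : Efficient f) :
    ¬ ∀ i : Fin 3, Owns f i i := by
  intro hOwn
  have dec : Function.Injective (![1,3,2] : Fin 3 → ℕ) := by decide
  rcases classify3 (f cycP).1 (f cycP).2 with ⟨h0, h1, h2⟩ | ⟨h0, h1, h2⟩ |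
    ⟨h0, h1, h2⟩ | ⟨h0, h1, h2⟩
  · -- identity: dominated by m01
    refine hE cycP ⟨m01, forall_fin3 ?_ ?_ ?_,
      ⟨0, by rw [h0]; exact rel3 ![1,3,2] (by decide) 1 0 (by decide)⟩⟩
    · exact Or.inr (by rw [h0]; exact rel3 ![1,3,2] (by decide) 1 0 (by decide))
    · exact Or.inr (by rw [h1]; exact rel3 ![2,1,3] (by decide) 0 1 (by decide))
    · exact Or.inl (by rw [h2]; rfl)
  · -- {0,1} matched, 2 single; blocking pair {1,2}
    rcases classify3 (f QA).1 (f QA).2 with ⟨k0, k1, k2⟩ | ⟨k0, k1, k2⟩ |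
      ⟨k0, k1, k2⟩ | ⟨k0, k1, k2⟩
    · refine hE QA ⟨m12, forall_fin3 ?_ ?_ ?_,
        ⟨1, by rw [k1]; exact rel3 ![1,2,3] (by decide) 2 1 (by decide)⟩⟩
      · exact Or.inl (by rw [k0]; rfl)
      · exact Or.inr (by rw [k1]; exact rel3 ![1,2,3] (by decide) 2 1 (by decide))
      · exact Or.inr (by rw [k2]; exact rel3 ![1,3,2] (by decide) 1 2 (by decide))
    · exact noWorst f hG hOwn QA 1 (mk3 ![1,3,2] (by decide))
        (top3 _ _ _ (by decide)) (by rw [k1]; exact rel3 ![1,2,3] (by decide) 1 0 (by decide))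
    · exact noWorst f hG hOwn QA 2 (mk3 ![1,2,3] (by decide))
        (top3 _ _ _ (by decide)) (by rw [k2]; exact rel3 ![1,3,2] (by decide) 2 0 (by decide))
    · apply hG
      refine ⟨cycP, QA, {1, 2}, forall_fin3 ?_ ?_ ?_, forall_fin3 ?_ ?_ ?_,
        ⟨1, Set.mem_insert _ _, by rw [k1, h1]; exact rel3 ![2,1,3] (by decide) 2 0 (by decide)⟩⟩
      · exact fun _ => Eq.trans (rfl : QA 0 = cp0) (rfl : cp0 = cycP 0)
      · exact fun h => absurd (Set.mem_insert _ _) h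
      · exact fun h => absurd (Set.mem_insert_of_mem _ rfl) h
      · exact fun h => absurd (notMem1 0 (by decide) (by decide) h) not_false
      · exact fun _ => Or.inr (by rw [k1, h1]; exact rel3 ![2,1,3] (by decide) 2 0 (by decide))
      · exact fun _ => Or.inr (by rw [k2, h2]; exact rel3 ![3,2,1] (by decide) 1 2 (by decide))
  · -- {0,2} matched, 1 single; blocking pair {0,1}
    rcases classify3 (f QB).1 (f QB).2 with ⟨k0, k1, k2⟩ | ⟨k0, k1, k2⟩ |
      ⟨k0, k1, k2⟩ | ⟨k0, k1, k2⟩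
    · refine hE QB ⟨m01, forall_fin3 ?_ ?_ ?_,
        ⟨0, by rw [k0]; exact rel3 ![2,3,1] (by decide) 1 0 (by decide)⟩⟩
      · exact Or.inr (by rw [k0]; exact rel3 ![2,3,1] (by decide) 1 0 (by decide))
      · exact Or.inr (by rw [k1]; exact rel3 ![3,2,1] (by decide) 0 1 (by decide))
      · exact Or.inl (by rw [k2]; rfl)
    · apply hG
      refine ⟨cycP, QB, {0, 1}, forall_fin3 ?_ ?_ ?_, forall_fin3 ?_ ?_ ?_,
        ⟨0, Set.mem_insert _ _, by rw [k0, h0]; exact rel3 ![1,3,2] (by decide) 1 2 (by decide)⟩⟩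
      · exact fun h => absurd (Set.mem_insert _ _) h
      · exact fun h => absurd (Set.mem_insert_of_mem _ rfl) h
      · exact fun _ => Eq.trans (rfl : QB 2 = cp2) (rfl : cp2 = cycP 2)
      · exact fun _ => Or.inr (by rw [k0, h0]; exact rel3 ![1,3,2] (by decide) 1 2 (by decide))
      · exact fun _ => Or.inr (by rw [k1, h1]; exact rel3 ![2,1,3] (by decide) 0 1 (by decide))
      · exact fun h => absurd (notMem1 2 (by decide) (by decide) h) not_false
    · exact noWorst f hG hOwn QB 0 (mk3 ![3,2,1] (by decide))
        (top3 _ _ _ (by decide)) (by rw [k0]; exact rel3 ![2,3,1] (by decide) 0 2 (by decide))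
    · exact noWorst f hG hOwn QB 1 (mk3 ![1,3,2] (by decide))
        (top3 _ _ _ (by decide)) (by rw [k1]; exact rel3 ![3,2,1] (by decide) 1 2 (by decide))
  · -- {1,2} matched, 0 single; blocking pair {0,2}
    rcases classify3 (f QC).1 (f QC).2 with ⟨k0, k1, k2⟩ | ⟨k0, k1, k2⟩ |
      ⟨k0, k1, k2⟩ | ⟨k0, k1, k2⟩
    · refine hE QC ⟨m02, forall_fin3 ?_ ?_ ?_,
        ⟨0, by rw [k0]; exact rel3 ![2,1,3] (by decide) 2 0 (by decide)⟩⟩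
      · exact Or.inr (by rw [k0]; exact rel3 ![2,1,3] (by decide) 2 0 (by decide))
      · exact Or.inl (by rw [k1]; rfl)
      · exact Or.inr (by rw [k2]; exact rel3 ![3,1,2] (by decide) 0 2 (by decide))
    · exact noWorst f hG hOwn QC 0 (mk3 ![3,2,1] (by decide))
        (top3 _ _ _ (by decide)) (by rw [k0]; exact rel3 ![2,1,3] (by decide) 0 1 (by decide))
    · apply hG
      refine ⟨cycP, QC, {0, 2}, forall_fin3 ?_ ?_ ?_, forall_fin3 ?_ ?_ ?_,
        ⟨0, Set.mem_insert _ _, by rw [k0, h0]; exact rel3 ![1,3,2] (by decide) 2 0 (by decide)⟩⟩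
      · exact fun h => absurd (Set.mem_insert _ _) h
      · exact fun _ => Eq.trans (rfl : QC 1 = cp1) (rfl : cp1 = cycP 1)
      · exact fun h => absurd (Set.mem_insert_of_mem _ rfl) h
      · exact fun _ => Or.inr (by rw [k0, h0]; exact rel3 ![1,3,2] (by decide) 2 0 (by decide))
      · exact fun h => absurd (notMem1 1 (by decide) (by decide) h) not_false
      · exact fun _ => Or.inr (by rw [k2, h2]; exact rel3 ![3,2,1] (by decide) 0 1 (by decide))
    · exact noWorst f hG hOwn QC 2 (mk3 ![1,2,3] (by decide))
        (top3 _ _ _ (by decide)) (by rw [k2]; exact rel3 ![3,1,2] (by decide) 2 1 (by decide))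
end

section
/- Consider one-sided matching with four agents and the subdomain of profiles where every agent bottom-ranks staying single. On this subdomain every efficient matching leaves no agent single, there are exactly three perfect matchings, and any group strategy-proof efficient mechanism restricted to this subdomain is a dictatorship (a fixed agent always receives their top-ranked partner). -/
/-- `μ` is efficient at `P`: not Pareto dominated by any matching. -/
def EfficientAt {A : Type} (P : Profile A) (μ : Matching A) : Prop :=
  ¬ ∃ ν : Matching A, dominates P ν.1 μ.1

/-- Profiles where every agent bottom-ranks staying single. -/
def BottomSingle {A : Type} (P : Profile A) : Prop :=
  ∀ i a, a ≠ i → (P i).1 a i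

set_option maxRecDepth 100000

namespace GS10

instance instDecInj : ∀ f : Fin 3 → Fin 3, Decidable (Function.Injective f) :=
  fun f => decidable_of_iff (∀ a b, f a = f b → a = b) Iff.rfl
instance instDecInv : ∀ f : Fin 4 → Fin 4, Decidable (Function.Involutive f) :=
  fun f => decidable_of_iff (∀ x, f (f x) = x) Iff.rfl

abbrev V := {v : Fin 3 → Fin 3 // Function.Injective v}

def pm : Fin 3 → Fin 4 → Fin 4 := ![![1,0,3,2], ![2,3,0,1], ![3,2,1,0]]
def mi (i a : Fin 4) : Fin 3 := if a = pm 0 i then 0 else if a = pm 1 i then 1 else 2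
def score (i : Fin 4) (v : V) (a : Fin 4) : Fin 4 :=
  if a = i then 3 else (v.1 (mi i a)).castSucc

lemma score_inj : ∀ (i : Fin 4) (v : V) (a b : Fin 4), score i v a = score i v b → a = b := by
  decide

def mkPref (i : Fin 4) (v : V) : Pref (Fin 4) :=
  ⟨fun a b => score i v a < score i v b,
   { trichotomous := fun a b => by
       rcases lt_trichotomy (score i v a) (score i v b) with h | h | h
       · exact fun h1 _ => absurd h h1
       · exact fun _ _ => score_inj i v a b h
       · exact fun _ h2 => absurd h h2
     irrefl := fun a => lt_irrefl _
     trans := fun a b c => lt_trans }⟩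

def mkProf (Q : Fin 4 → V) : Profile (Fin 4) := fun i => mkPref i (Q i)

/-! ### Part 1 : efficient matchings are perfect -/

lemma part1 : ∀ P : Profile (Fin 4), BottomSingle P →
    ∀ μ : Matching (Fin 4), EfficientAt P μ → ∀ a, μ.1 a ≠ a := by
  intro P hB μ hEff a ha
  obtain ⟨b, hb, hbb⟩ :=
    (by decide : ∀ (m : Fin 4 → Fin 4) (a : Fin 4), Function.Involutive m → m a = a →
        ∃ b, b ≠ a ∧ m b = b) μ.1 a μ.2 ha
  set ν : Fin 4 → Fin 4 := fun x => if x = a then b else if x = b then a else μ.1 x with hν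
  have hνa : ν a = b := by simp [hν]
  have hνb : ν b = a := by simp [hν, hb]
  have hνo : ∀ x, x ≠ a → x ≠ b → ν x = μ.1 x := by
    intro x h1 h2; simp [hν, h1, h2]
  have hinv : Function.Involutive ν := by
    intro x
    by_cases h1 : x = a
    · subst h1; rw [hνa, hνb]
    · by_cases h2 : x = b
      · subst h2; rw [hνb, hνa]
      · have hma : μ.1 x ≠ a := fun h => h1 (by rw [← μ.2 x, h, ha])
        have hmb : μ.1 x ≠ b := fun h => h2 (by rw [← μ.2 x, h, hbb])
        rw [hνo x h1 h2, hνo _ hma hmb, μ.2 x]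
  apply hEff
  refine ⟨⟨ν, hinv⟩, ?_, ⟨a, ?_⟩⟩
  · intro i
    have hgoal : ν i = μ.1 i ∨ (P i).1 (ν i) (μ.1 i) → (⟨ν, hinv⟩ : Matching (Fin 4)).1 i = μ.1 i ∨ (P i).1 ((⟨ν, hinv⟩ : Matching (Fin 4)).1 i) (μ.1 i) := fun h => h
    apply hgoal
    by_cases h1 : i = a
    · subst h1; right; rw [hνa, ha]; exact hB i b hb
    · by_cases h2 : i = b
      · subst h2; right; rw [hνb, hbb]; exact hB i a (fun h => hb h.symm)
      · left; exact hνo i h1 h2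
  · show (P a).1 (ν a) (μ.1 a)
    rw [hνa, ha]; exact hB a b hb

/-! ### Translation layer -/

lemma hBS : ∀ Q : Fin 4 → V, BottomSingle (mkProf Q) := by
  intro Q i a ha
  exact (by decide : ∀ (i : Fin 4) (v : V) (a : Fin 4), a ≠ i →
    score i v a < score i v i) i (Q i) a ha

lemma pm_inv : ∀ k : Fin 3, Function.Involutive (pm k) := by decide

lemma T2 : ∀ (i : Fin 4) (v : V) (k k' : Fin 3),
    v.1 k < v.1 k' → score i v (pm k i) < score i v (pm k' i) := by decide

variable (f : Profile (Fin 4) → Matching (Fin 4))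

def gFun (Q : Fin 4 → V) : Fin 3 := mi 0 ((f (mkProf Q)).1 0)

lemma hperf (hE : Efficient f) (Q : Fin 4 → V) :
    (f (mkProf Q)).1 = pm (gFun f Q) := by
  have hnf : ∀ a, (f (mkProf Q)).1 a ≠ a :=
    part1 (mkProf Q) (hBS Q) (f (mkProf Q)) (hE (mkProf Q))
  exact (by decide : ∀ (m : Fin 4 → Fin 4), Function.Involutive m → (∀ a, m a ≠ a) →
    m = pm (mi 0 (m 0))) (f (mkProf Q)).1 (f (mkProf Q)).2 hnf

lemma Ps (hE : Efficient f) :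
    ∀ (Q : Fin 4 → V) (k : Fin 3), (∀ i, (Q i).1 k < (Q i).1 (gFun f Q)) → False := by
  intro Q k hk
  apply hE (mkProf Q)
  refine ⟨⟨pm k, pm_inv k⟩, fun i => Or.inr ?_, ⟨0, ?_⟩⟩
  · show score i (Q i) (pm k i) < score i (Q i) ((f (mkProf Q)).1 i)
    rw [congrFun (hperf f hE Q) i]
    exact T2 i (Q i) _ _ (hk i)
  · show score 0 (Q 0) (pm k 0) < score 0 (Q 0) ((f (mkProf Q)).1 0)
    rw [congrFun (hperf f hE Q) 0]
    exact T2 0 (Q 0) _ _ (hk 0)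

lemma Gs (hG : GroupSP f) (hE : Efficient f) :
    ∀ (Q Q' : Fin 4 → V) (S : Finset (Fin 4)),
      (∀ i, i ∉ S → Q' i = Q i) →
      (∀ i ∈ S, gFun f Q' = gFun f Q ∨ (Q i).1 (gFun f Q') < (Q i).1 (gFun f Q)) →
      (∃ i ∈ S, (Q i).1 (gFun f Q') < (Q i).1 (gFun f Q)) → False := by
  intro Q Q' S h1 h2 h3
  apply hG
  refine ⟨mkProf Q, mkProf Q', ↑S, ?_, ?_, ?_⟩
  · intro i hi
    exact congrArg (mkPref i) (h1 i (by simpa using hi))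
  · intro i hi
    rw [congrFun (hperf f hE Q') i, congrFun (hperf f hE Q) i]
    rcases h2 i (by simpa using hi) with h | h
    · left; rw [h]
    · right; exact T2 i (Q i) _ _ h
  · obtain ⟨i, hi, h⟩ := h3
    refine ⟨i, by simpa using hi, ?_⟩
    rw [congrFun (hperf f hE Q') i, congrFun (hperf f hE Q) i]
    exact T2 i (Q i) _ _ h

end GS10
namespace GS10

/-! ### Abstract 3-alternative social choice -/

def ordfn (x y : Fin 3) : Fin 3 → Fin 3 := fun k =>
  if x = y then k else if k = x then 0 else if k = y then 1 else 2

lemma ordfn_inj : ∀ x y : Fin 3, Function.Injective (ordfn x y) := by decide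

def ordv (x y : Fin 3) : V := ⟨ordfn x y, ordfn_inj x y⟩

lemma ordA : ∀ x y k : Fin 3, x ≠ y → k ≠ x → (ordv x y).1 x < (ordv x y).1 k := by decide
lemma ordB : ∀ x y k : Fin 3, x ≠ y → k ≠ x → k ≠ y → (ordv x y).1 y < (ordv x y).1 k := by decide
lemma fin3cases : ∀ w x y z : Fin 3, x ≠ y → x ≠ z → y ≠ z → w ≠ x → w ≠ y → w = z := by decide
lemma third : ∀ x y : Fin 3, x ≠ y → ∃ z, z ≠ x ∧ z ≠ y := by decide

def twoP (S : Finset (Fin 4)) (x y : Fin 3) : Fin 4 → V := fun i =>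
  if i ∈ S then ordv x y else ordv y x

lemma twoP_mem {S : Finset (Fin 4)} {i : Fin 4} (h : i ∈ S) (x y : Fin 3) :
    twoP S x y i = ordv x y := if_pos h
lemma twoP_not_mem {S : Finset (Fin 4)} {i : Fin 4} (h : i ∉ S) (x y : Fin 3) :
    twoP S x y i = ordv y x := if_neg h

lemma twoP_compl (S : Finset (Fin 4)) (x y : Fin 3) : twoP Sᶜ y x = twoP S x y := by
  funext i
  by_cases hi : i ∈ S <;> simp [twoP, hi, Finset.mem_compl]

section Abstract

variable (g : (Fin 4 → V) → Fin 3)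
variable (hPs : ∀ (Q : Fin 4 → V) (k : Fin 3), (∀ i, (Q i).1 k < (Q i).1 (g Q)) → False)
variable (hGs : ∀ (Q Q' : Fin 4 → V) (S : Finset (Fin 4)),
      (∀ i, i ∉ S → Q' i = Q i) →
      (∀ i ∈ S, g Q' = g Q ∨ (Q i).1 (g Q') < (Q i).1 (g Q)) →
      (∃ i ∈ S, (Q i).1 (g Q') < (Q i).1 (g Q)) → False)

/-- Decisiveness on the canonical two-group profile. -/
def D (S : Finset (Fin 4)) (x y : Fin 3) : Prop := g (twoP S x y) = x

include hPs in
lemma D_or (S : Finset (Fin 4)) {x y : Fin 3} (hxy : x ≠ y) :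
    D g S x y ∨ g (twoP S x y) = y := by
  by_cases h1 : g (twoP S x y) = x
  · exact Or.inl h1
  by_cases h2 : g (twoP S x y) = y
  · exact Or.inr h2
  exfalso
  apply hPs (twoP S x y) x
  intro i
  by_cases hi : i ∈ S
  · rw [twoP_mem hi]
    exact ordA x y _ hxy h1
  · rw [twoP_not_mem hi]
    exact ordB y x _ (Ne.symm hxy) h2 h1

include hPs in
lemma D_nonempty {S : Finset (Fin 4)} {x y : Fin 3} (hxy : x ≠ y) (hD : D g S x y) :
    ∃ i, i ∈ S := by
  by_contra hc
  push_neg at hc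
  apply hPs (twoP S x y) y
  intro i
  rw [twoP_not_mem (hc i), hD]
  exact ordA y x x (Ne.symm hxy) hxy

include hPs hGs in
lemma D_mono {S T : Finset (Fin 4)} {x y : Fin 3} (hxy : x ≠ y) (hST : S ⊆ T)
    (hD : D g S x y) : D g T x y := by
  rcases D_or g hPs T hxy with h1 | h1
  · exact h1
  exfalso
  by_cases hTS : T \ S = ∅
  · have : T = S := subset_antisymm (Finset.sdiff_eq_empty_iff_subset.1 hTS) hST
    rw [this, hD] at h1; exact hxy h1
  obtain ⟨j, hj⟩ := Finset.nonempty_iff_ne_empty.2 hTS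
  have hwit : ∀ i ∈ T \ S, (twoP T x y i).1 (g (twoP S x y)) < (twoP T x y i).1 (g (twoP T x y)) := by
    intro i hi
    have hiT := (Finset.mem_sdiff.1 hi).1
    rw [twoP_mem hiT, hD, h1]
    exact ordA x y y hxy (Ne.symm hxy)
  apply hGs (twoP T x y) (twoP S x y) (T \ S)
  · intro i hi
    by_cases hiS : i ∈ S
    · rw [twoP_mem hiS, twoP_mem (hST hiS)]
    · have hiT : i ∉ T := fun h => hi (Finset.mem_sdiff.2 ⟨h, hiS⟩)
      rw [twoP_not_mem hiS, twoP_not_mem hiT]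
  · exact fun i hi => Or.inr (hwit i hi)
  · exact ⟨j, hj, hwit j hj⟩

include hPs in
lemma D_dual {S : Finset (Fin 4)} {x y : Fin 3} (hxy : x ≠ y) :
    ¬ D g S x y ↔ D g Sᶜ y x := by
  have h1 : D g Sᶜ y x ↔ g (twoP S x y) = y := by
    unfold D; rw [twoP_compl]
  constructor
  · intro h
    rcases D_or g hPs S hxy with hx | hy
    · exact absurd hx h
    · exact h1.mpr hy
  · intro h2 hx
    have hy := h1.mp h2
    unfold D at hx
    rw [hx] at hy
    exact hxy hy
end Abstract
end GS10
namespace GS10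
section Abstract
variable (g : (Fin 4 → V) → Fin 3)
variable (hPs : ∀ (Q : Fin 4 → V) (k : Fin 3), (∀ i, (Q i).1 k < (Q i).1 (g Q)) → False)
variable (hGs : ∀ (Q Q' : Fin 4 → V) (S : Finset (Fin 4)),
      (∀ i, i ∉ S → Q' i = Q i) →
      (∀ i ∈ S, g Q' = g Q ∨ (Q i).1 (g Q') < (Q i).1 (g Q)) →
      (∃ i ∈ S, (Q i).1 (g Q') < (Q i).1 (g Q)) → False)

lemma compl_wit {S : Finset (Fin 4)} (h : S ≠ Finset.univ) : ∃ i, i ∉ S := by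
  by_contra hc
  push_neg at hc
  exact h (Finset.eq_univ_iff_forall.2 hc)

include hPs hGs in
lemma D_snd {S : Finset (Fin 4)} {x y z : Fin 3} (hxy : x ≠ y) (hxz : x ≠ z) (hyz : y ≠ z)
    (hD : D g S x y) : D g S x z := by
  classical
  set Q1 : Fin 4 → V := fun i => if i ∈ S then ordv x y else ordv y z with hQ1
  set Q2 : Fin 4 → V := fun i => if i ∈ S then ordv x z else ordv y z with hQ2
  have hm1 : ∀ j, j ∈ S → Q1 j = ordv x y := by intro j hj; simp only [hQ1]; exact if_pos hj
  have hn1 : ∀ j, j ∉ S → Q1 j = ordv y z := by intro j hj; simp only [hQ1]; exact if_neg hj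
  have hm2 : ∀ j, j ∈ S → Q2 j = ordv x z := by intro j hj; simp only [hQ2]; exact if_pos hj
  have hn2 : ∀ j, j ∉ S → Q2 j = ordv y z := by intro j hj; simp only [hQ2]; exact if_neg hj
  -- step a : g Q1 ≠ z
  have hz : g Q1 ≠ z := by
    intro hgz
    apply hPs Q1 y
    intro i
    by_cases hi : i ∈ S
    · rw [hm1 i hi, hgz]
      exact ordB x y z hxy (Ne.symm hxz) (Ne.symm hyz)
    · rw [hn1 i hi, hgz]
      exact ordA y z z hyz (Ne.symm hyz)
  -- step b : g Q1 ≠ y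
  have hy : g Q1 ≠ y := by
    intro hgy
    by_cases hu : S = Finset.univ
    · apply hPs Q1 x
      intro i
      have hi : i ∈ S := by rw [hu]; exact Finset.mem_univ i
      rw [hm1 i hi, hgy]
      exact ordA x y y hxy (Ne.symm hxy)
    · obtain ⟨j, hj⟩ := compl_wit hu
      have hwit : ∀ i, i ∉ S → (twoP S x y i).1 (g Q1) < (twoP S x y i).1 (g (twoP S x y)) := by
        intro i hi
        rw [twoP_not_mem hi, hgy, hD]
        exact ordA y x x (Ne.symm hxy) hxy
      apply hGs (twoP S x y) Q1 Sᶜ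
      · intro i hi
        have hiS : i ∈ S := by simpa using hi
        rw [hm1 i hiS, twoP_mem hiS]
      · intro i hi
        exact Or.inr (hwit i (by simpa using hi))
      · exact ⟨j, Finset.mem_compl.2 hj, hwit j hj⟩
  have hx1 : g Q1 = x := fin3cases _ z y x (Ne.symm hyz) (Ne.symm hxz) (Ne.symm hxy) hz hy
  -- step c : g Q2 = x
  have hx2 : g Q2 = x := by
    by_contra hne
    obtain ⟨i0, hi0⟩ := D_nonempty g hPs hxy hD
    have hwit : ∀ i, i ∈ S → (Q2 i).1 (g Q1) < (Q2 i).1 (g Q2) := by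
      intro i hi
      rw [hm2 i hi, hx1]
      exact ordA x z (g Q2) hxz hne
    apply hGs Q2 Q1 S
    · intro i hi
      rw [hn1 i hi, hn2 i hi]
    · exact fun i hi => Or.inr (hwit i hi)
    · exact ⟨i0, hi0, hwit i0 hi0⟩
  -- step d : conclusion
  by_cases hu : S = Finset.univ
  · have heq : twoP S x z = Q2 := by
      funext i
      have hi : i ∈ S := by rw [hu]; exact Finset.mem_univ i
      rw [hm2 i hi, twoP_mem hi]
    show g (twoP S x z) = x
    rw [heq]; exact hx2
  · obtain ⟨j, hj⟩ := compl_wit hu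
    rcases D_or g hPs S hxz with h | h
    · exact h
    exfalso
    have hwit : ∀ i, i ∉ S → (Q2 i).1 (g (twoP S x z)) < (Q2 i).1 (g Q2) := by
      intro i hi
      rw [hn2 i hi, h, hx2]
      exact ordB y z x hyz hxy hxz
    apply hGs Q2 (twoP S x z) Sᶜ
    · intro i hi
      have hiS : i ∈ S := by simpa using hi
      rw [hm2 i hiS, twoP_mem hiS]
    · intro i hi
      exact Or.inr (hwit i (by simpa using hi))
    · exact ⟨j, Finset.mem_compl.2 hj, hwit j hj⟩

include hPs hGs in
lemma D_fst {S : Finset (Fin 4)} {x y z : Fin 3} (hxy : x ≠ y) (hxz : x ≠ z) (hyz : y ≠ z)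
    (hD : D g S x y) : D g S z y := by
  by_contra h
  have h1 : D g Sᶜ y z := (D_dual g hPs (Ne.symm hyz)).1 h
  have h2 : D g Sᶜ y x := D_snd g hPs hGs hyz (Ne.symm hxy) (Ne.symm hxz) h1
  exact (D_dual g hPs hxy).2 h2 hD

include hPs hGs in
lemma D_any {S : Finset (Fin 4)} {x y : Fin 3} (hxy : x ≠ y) (hD : D g S x y) :
    ∀ x' y' : Fin 3, x' ≠ y' → D g S x' y' := by
  intro x' y' h'
  obtain ⟨z, hzx, hzy⟩ := third x y hxy
  have d_xz : D g S x z := D_snd g hPs hGs hxy (Ne.symm hzx) (Ne.symm hzy) hD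
  have d_zy : D g S z y := D_fst g hPs hGs hxy (Ne.symm hzx) (Ne.symm hzy) hD
  have d_yz : D g S y z := D_fst g hPs hGs (Ne.symm hzx) hxy hzy d_xz
  have d_zx : D g S z x := D_snd g hPs hGs hzy hzx (Ne.symm hxy) d_zy
  have d_yx : D g S y x := D_snd g hPs hGs (Ne.symm hzy) (Ne.symm hxy) hzx d_yz
  by_cases h1 : x' = x
  · by_cases h2 : y' = y
    · rw [h1, h2]; exact hD
    · rw [h1]
      exact D_snd g hPs hGs hxy (fun hh => h' (by rw [h1]; exact hh)) (Ne.symm h2) hD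
  · by_cases h2 : x' = y
    · rw [h2]
      by_cases h3 : y' = x
      · rw [h3]; exact d_yx
      · have hy'y : y' ≠ y := fun hh => h' (by rw [h2, hh])
        have h4 : y' = z := fin3cases y' x y z hxy (Ne.symm hzx) (Ne.symm hzy) h3 hy'y
        rw [h4]; exact d_yz
    · have h4 : x' = z := fin3cases x' x y z hxy (Ne.symm hzx) (Ne.symm hzy) h1 h2
      rw [h4]
      by_cases h3 : y' = x
      · rw [h3]; exact d_zx
      · have hy'z : y' ≠ z := fun hh => h' (by rw [h4, hh])
        have h5 : y' = y := fin3cases y' x z y (Ne.symm hzx) hxy hzy h3 hy'z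
        rw [h5]; exact d_zy

end Abstract
end GS10
namespace GS10

def patch (Q : Fin 4 → V) (S : Finset (Fin 4)) (v : V) : Fin 4 → V :=
  fun i => if i ∈ S then v else Q i

section Abstract2
variable (g : (Fin 4 → V) → Fin 3)
variable (hPs : ∀ (Q : Fin 4 → V) (k : Fin 3), (∀ i, (Q i).1 k < (Q i).1 (g Q)) → False)
variable (hGs : ∀ (Q Q' : Fin 4 → V) (S : Finset (Fin 4)),
      (∀ i, i ∉ S → Q' i = Q i) →
      (∀ i ∈ S, g Q' = g Q ∨ (Q i).1 (g Q') < (Q i).1 (g Q)) →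
      (∃ i ∈ S, (Q i).1 (g Q') < (Q i).1 (g Q)) → False)

lemma h01 : (0 : Fin 3) ≠ 1 := by decide

def Dec (S : Finset (Fin 4)) : Prop := D g S 0 1

include hPs hGs in
lemma Dec_any {S : Finset (Fin 4)} (h : Dec g S) {x y : Fin 3} (hxy : x ≠ y) :
    D g S x y := D_any g hPs hGs h01 h x y hxy

include hPs in
lemma Dec_univ : Dec g Finset.univ := by
  rcases D_or g hPs Finset.univ h01 with h | h
  · exact h
  exfalso
  apply hPs (twoP Finset.univ 0 1) 0
  intro i
  rw [twoP_mem (Finset.mem_univ i), h]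
  exact ordA 0 1 1 h01 (Ne.symm h01)

include hPs in
lemma Dec_nonempty {S : Finset (Fin 4)} (h : Dec g S) : ∃ i, i ∈ S :=
  D_nonempty g hPs h01 h

include hPs hGs in
lemma Dec_neg {S : Finset (Fin 4)} (h : ¬ Dec g S) : Dec g Sᶜ :=
  D_any g hPs hGs (Ne.symm h01) ((D_dual g hPs h01).1 h) 0 1 h01

include hPs hGs in
lemma D_force {S : Finset (Fin 4)} (hDec : Dec g S) (Q : Fin 4 → V) {x y : Fin 3}
    (hxy : x ≠ y) : g (patch Q S (ordv x y)) = x := by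
  classical
  obtain ⟨z, hzx, hzy⟩ := third x y hxy
  by_cases hgx : g (patch Q S (ordv x y)) = x
  · exact hgx
  exfalso
  obtain ⟨i0, hi0⟩ := Dec_nonempty g hPs hDec
  have hDxy : D g S x y := Dec_any g hPs hGs hDec hxy
  have hDxz : D g S x z := Dec_any g hPs hGs hDec (Ne.symm hzx)
  by_cases hgy : g (patch Q S (ordv x y)) = y
  · by_cases hu : S = Finset.univ
    · have heq : twoP S x y = patch Q S (ordv x y) := by
        funext i
        have hi : i ∈ S := by rw [hu]; exact Finset.mem_univ i
        show _ = (if i ∈ S then ordv x y else Q i)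
        rw [if_pos hi, twoP_mem hi]
      rw [← heq, hDxy] at hgy
      exact hxy hgy
    · obtain ⟨j, hj⟩ := compl_wit hu
      have hwit : ∀ i, i ∉ S →
          (twoP S x y i).1 (g (patch Q S (ordv x y))) < (twoP S x y i).1 (g (twoP S x y)) := by
        intro i hi
        rw [twoP_not_mem hi, hgy, hDxy]
        exact ordA y x x (Ne.symm hxy) hxy
      apply hGs (twoP S x y) (patch Q S (ordv x y)) Sᶜ
      · intro i hi
        have hiS : i ∈ S := by simpa using hi
        show (if i ∈ S then ordv x y else Q i) = _
        rw [if_pos hiS, twoP_mem hiS]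
      · intro i hi
        exact Or.inr (hwit i (by simpa using hi))
      · exact ⟨j, Finset.mem_compl.2 hj, hwit j hj⟩
  · have hgz : g (patch Q S (ordv x y)) = z :=
      fin3cases _ x y z hxy (Ne.symm hzx) (Ne.symm hzy) hgx hgy
    have hgz' : g (patch Q S (ordv x z)) = z := by
      by_contra hne
      have hwit : ∀ i, i ∈ S →
          (patch Q S (ordv x y) i).1 (g (patch Q S (ordv x z))) <
          (patch Q S (ordv x y) i).1 (g (patch Q S (ordv x y))) := by
        intro i hi
        show (if i ∈ S then ordv x y else Q i).1 _ < (if i ∈ S then ordv x y else Q i).1 _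
        rw [if_pos hi, hgz]
        by_cases hx' : g (patch Q S (ordv x z)) = x
        · rw [hx']
          exact ordA x y z hxy hzx
        · have : g (patch Q S (ordv x z)) = y :=
            fin3cases _ x z y (Ne.symm hzx) hxy hzy hx' hne
          rw [this]
          exact ordB x y z hxy hzx hzy
      apply hGs (patch Q S (ordv x y)) (patch Q S (ordv x z)) S
      · intro i hi
        show (if i ∈ S then ordv x z else Q i) = (if i ∈ S then ordv x y else Q i)
        rw [if_neg hi, if_neg hi]
      · exact fun i hi => Or.inr (hwit i hi)
      · exact ⟨i0, hi0, hwit i0 hi0⟩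
    by_cases hu : S = Finset.univ
    · have heq : twoP S x z = patch Q S (ordv x z) := by
        funext i
        have hi : i ∈ S := by rw [hu]; exact Finset.mem_univ i
        show _ = (if i ∈ S then ordv x z else Q i)
        rw [if_pos hi, twoP_mem hi]
      rw [← heq, hDxz] at hgz'
      exact hzx hgz'.symm
    · obtain ⟨j, hj⟩ := compl_wit hu
      have hwit : ∀ i, i ∉ S →
          (twoP S x z i).1 (g (patch Q S (ordv x z))) < (twoP S x z i).1 (g (twoP S x z)) := by
        intro i hi
        rw [twoP_not_mem hi, hgz', hDxz]
        exact ordA z x x hzx (Ne.symm hzx)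
      apply hGs (twoP S x z) (patch Q S (ordv x z)) Sᶜ
      · intro i hi
        have hiS : i ∈ S := by simpa using hi
        show (if i ∈ S then ordv x z else Q i) = _
        rw [if_pos hiS, twoP_mem hiS]
      · intro i hi
        exact Or.inr (hwit i (by simpa using hi))
      · exact ⟨j, Finset.mem_compl.2 hj, hwit j hj⟩

include hPs hGs in
lemma Dec_strong {S : Finset (Fin 4)} (hDec : Dec g S) (Q : Fin 4 → V) (x : Fin 3)
    (hx : ∀ i ∈ S, (Q i).1 x < (Q i).1 (g Q)) : False := by
  obtain ⟨y, hxy⟩ := (by decide : ∀ x : Fin 3, ∃ y, x ≠ y) x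
  have hgR := D_force g hPs hGs hDec Q hxy
  obtain ⟨i0, hi0⟩ := Dec_nonempty g hPs hDec
  apply hGs Q (patch Q S (ordv x y)) S
  · intro i hi
    exact if_neg hi
  · intro i hi
    right; rw [hgR]; exact hx i hi
  · exact ⟨i0, hi0, by rw [hgR]; exact hx i0 hi0⟩

def quoQ (S1 S2 S3 : Finset (Fin 4)) : Fin 4 → V := fun i =>
  if i ∈ S1 ∧ i ∈ S2 then ordv 0 1
  else if i ∈ S2 then ordv 1 2
  else if i ∈ S3 then ordv 2 0
  else ordv 0 1

include hPs hGs in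
lemma no_three {S1 S2 S3 : Finset (Fin 4)} (hD1 : Dec g S1) (hD2 : Dec g S2)
    (hD3 : Dec g S3) (hemp : S1 ∩ S2 ∩ S3 = ∅) : False := by
  classical
  set Q := quoQ S1 S2 S3 with hQdef
  have hnt : ∀ i, ¬ (i ∈ S1 ∧ i ∈ S2 ∧ i ∈ S3) := by
    rintro i ⟨h1, h2, h3⟩
    have : i ∈ S1 ∩ S2 ∩ S3 := by simp [Finset.mem_inter, h1, h2, h3]
    rw [hemp] at this
    exact absurd this (Finset.notMem_empty i)
  have c0 : g Q ≠ 0 := by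
    intro hg
    apply Dec_strong g hPs hGs hD3 Q 2
    intro i hi3
    rw [hg]
    show (quoQ S1 S2 S3 i).1 2 < (quoQ S1 S2 S3 i).1 0
    unfold quoQ
    by_cases h12 : i ∈ S1 ∧ i ∈ S2
    · exact absurd ⟨h12.1, h12.2, hi3⟩ (hnt i)
    · rw [if_neg h12]
      by_cases h2 : i ∈ S2
      · rw [if_pos h2]; decide
      · rw [if_neg h2, if_pos hi3]; decide
  have c1 : g Q ≠ 1 := by
    intro hg
    apply Dec_strong g hPs hGs hD1 Q 0
    intro i hi1
    rw [hg]
    show (quoQ S1 S2 S3 i).1 0 < (quoQ S1 S2 S3 i).1 1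
    unfold quoQ
    by_cases h12 : i ∈ S1 ∧ i ∈ S2
    · rw [if_pos h12]; decide
    · have h2 : i ∉ S2 := fun h => h12 ⟨hi1, h⟩
      rw [if_neg h12, if_neg h2]
      by_cases h3 : i ∈ S3
      · rw [if_pos h3]; decide
      · rw [if_neg h3]; decide
  have c2 : g Q ≠ 2 := by
    intro hg
    apply Dec_strong g hPs hGs hD2 Q 1
    intro i hi2
    rw [hg]
    show (quoQ S1 S2 S3 i).1 1 < (quoQ S1 S2 S3 i).1 2
    unfold quoQ
    by_cases h12 : i ∈ S1 ∧ i ∈ S2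
    · rw [if_pos h12]; decide
    · rw [if_neg h12, if_pos hi2]; decide
  rcases (by decide : ∀ w : Fin 3, w = 0 ∨ w = 1 ∨ w = 2) (g Q) with h | h | h
  exacts [c0 h, c1 h, c2 h]

include hPs hGs in
lemma Dec_inter {S T : Finset (Fin 4)} (hS : Dec g S) (hT : Dec g T) : Dec g (S ∩ T) := by
  by_contra h
  have h3 : Dec g (S ∩ T)ᶜ := Dec_neg g hPs hGs h
  refine no_three g hPs hGs hS hT h3 ?_
  ext j
  simp only [Finset.mem_inter, Finset.mem_compl, Finset.notMem_empty, iff_false]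
  tauto

include hPs hGs in
lemma Dec_sing : ∃ i, Dec g {i} := by
  have main : ∀ (n : ℕ) (S : Finset (Fin 4)), S.card ≤ n → Dec g S → ∃ i, Dec g {i} := by
    intro n
    induction n with
    | zero =>
      intro S hc hD
      exfalso
      have hS : S = ∅ := Finset.card_eq_zero.1 (Nat.le_zero.1 hc)
      obtain ⟨i, hi⟩ := Dec_nonempty g hPs hD
      rw [hS] at hi
      exact absurd hi (Finset.notMem_empty i)
    | succ n ih =>
      intro S hc hD
      obtain ⟨i0, hi0⟩ := Dec_nonempty g hPs hD
      by_cases hone : Dec g {i0}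
      · exact ⟨i0, hone⟩
      · have h2 : Dec g ({i0}ᶜ) := Dec_neg g hPs hGs hone
        have h3 : Dec g (S ∩ {i0}ᶜ) := Dec_inter g hPs hGs hD h2
        have h4 : S ∩ {i0}ᶜ = S.erase i0 := by
          ext j
          simp [Finset.mem_erase, Finset.mem_compl, and_comm]
        rw [h4] at h3
        refine ih _ ?_ h3
        rw [Finset.card_erase_of_mem hi0]
        omega
  exact main 4 Finset.univ (by decide) (Dec_univ g hPs)

include hPs hGs in
lemma abstract_dict : ∃ i : Fin 4, ∀ Q : Fin 4 → V, (Q i).1 (g Q) = 0 := by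
  obtain ⟨i, hi⟩ := Dec_sing g hPs hGs
  refine ⟨i, fun Q => ?_⟩
  obtain ⟨x, hx⟩ := (by decide : ∀ v : V, ∃ x, v.1 x = 0) (Q i)
  by_cases hgx : g Q = x
  · rw [hgx, hx]
  · exfalso
    apply Dec_strong g hPs hGs hi Q x
    intro j hj
    have hji : j = i := by simpa using hj
    subst hji
    exact (by decide : ∀ (v : V) (a b : Fin 3), a ≠ b → v.1 a = 0 → v.1 a < v.1 b)
      (Q j) x (g Q) (fun h => hgx h.symm) hx

end Abstract2
end GS10
namespace GS10

lemma pm_ne : ∀ (i : Fin 4) (a b : Fin 3), a ≠ b → pm a i ≠ pm b i := by decide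
lemma pm_mi : ∀ (i a : Fin 4), a ≠ i → pm (mi i a) i = a := by decide
lemma castlt3 : ∀ w : Fin 3, (w.castSucc : Fin 4) < 3 := by decide
lemma notlt3 : ∀ w : Fin 3, ¬ ((3 : Fin 4) < w.castSucc) := by decide

lemma canon (P : Profile (Fin 4)) (hB : BottomSingle P) : ∃ Q, P = mkProf Q := by
  classical
  have key : ∀ i : Fin 4, ∃ v : V, P i = mkPref i v := by
    intro i
    haveI hsto : IsStrictTotalOrder (Fin 4) (P i).1 := (P i).2
    set rr := (P i).1 with hrr
    set cnt : Fin 3 → ℕ :=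
      fun k => (Finset.univ.filter fun k' => rr (pm k' i) (pm k i)).card with hcnt
    have hnm : ∀ k, k ∉ Finset.univ.filter fun k' => rr (pm k' i) (pm k i) := by
      intro k hk
      exact irrefl_of rr _ ((Finset.mem_filter.1 hk).2)
    have cnt_lt : ∀ k, cnt k < 3 := by
      intro k
      have hsub : (Finset.univ.filter fun k' => rr (pm k' i) (pm k i)) ⊆
          Finset.univ.erase k := by
        intro x hx
        refine Finset.mem_erase.2 ⟨?_, Finset.mem_univ x⟩
        intro hxk
        rw [hxk] at hx
        exact hnm k hx
      have h1 := Finset.card_le_card hsub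
      rw [Finset.card_erase_of_mem (Finset.mem_univ k)] at h1
      have h2 : (Finset.univ : Finset (Fin 3)).card = 3 := by decide
      simp only [hcnt]
      omega
    have hmono : ∀ a b : Fin 3, rr (pm a i) (pm b i) → cnt a < cnt b := by
      intro a b hab
      apply Finset.card_lt_card
      constructor
      · intro x hx
        obtain ⟨-, hx2⟩ := Finset.mem_filter.1 hx
        exact Finset.mem_filter.2 ⟨Finset.mem_univ x, trans_of rr hx2 hab⟩
      · intro hsup
        exact hnm a (hsup (Finset.mem_filter.2 ⟨Finset.mem_univ a, hab⟩))
    set v : Fin 3 → Fin 3 := fun k => ⟨cnt k, cnt_lt k⟩ with hv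
    have hvinj : Function.Injective v := by
      intro a b hab
      by_contra hne
      have hval : cnt a = cnt b := by
        have := congrArg Fin.val hab
        simpa [hv] using this
      rcases trichotomous_of rr (pm a i) (pm b i) with h | h | h
      · have := hmono a b h; omega
      · exact pm_ne i a b hne h
      · have := hmono b a h; omega
    refine ⟨⟨v, hvinj⟩, ?_⟩
    apply Subtype.ext
    funext a b
    apply propext
    show rr a b ↔ score i ⟨v, hvinj⟩ a < score i ⟨v, hvinj⟩ b
    unfold score
    by_cases ha : a = i
    · rw [ha]
      by_cases hb : b = i
      · rw [hb]
        exact iff_of_false (irrefl_of rr i) (lt_irrefl _)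
      · rw [if_neg hb, if_pos (rfl : i = i)]
        refine iff_of_false ?_ (notlt3 _)
        intro h
        exact irrefl_of rr i (trans_of rr h (hB i b hb))
    · by_cases hb : b = i
      · rw [hb, if_neg ha, if_pos (rfl : i = i)]
        exact iff_of_true (hB i a ha) (castlt3 _)
      · rw [if_neg ha, if_neg hb]
        by_cases hab : a = b
        · rw [hab]
          exact iff_of_false (irrefl_of rr b) (lt_irrefl _)
        · have hma : pm (mi i a) i = a := pm_mi i a ha
          have hmb : pm (mi i b) i = b := pm_mi i b hb
          have hcast : ((⟨v, hvinj⟩ : V).1 (mi i a)).castSucc <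
              ((⟨v, hvinj⟩ : V).1 (mi i b)).castSucc ↔ cnt (mi i a) < cnt (mi i b) := by
            rw [Fin.castSucc_lt_castSucc_iff]
            exact Iff.rfl
          rw [hcast]
          constructor
          · intro h
            exact hmono (mi i a) (mi i b) (by rw [hma, hmb]; exact h)
          · intro h
            rcases trichotomous_of rr a b with h1 | h1 | h1
            · exact h1
            · exact absurd h1 hab
            · exfalso
              have hlt := hmono (mi i b) (mi i a) (by rw [hma, hmb]; exact h1)
              omega
  choose Q hQ using key
  exact ⟨Q, funext hQ⟩

lemma toplem : ∀ (i : Fin 4) (v : V) (k : Fin 3) (c : Fin 4),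
    v.1 k = 0 → c ≠ pm k i → score i v (pm k i) < score i v c := by decide

end GS10


/-- Four agents, on the subdomain where everyone bottom-ranks being single:
every efficient matching is perfect (no singles), there are exactly three perfect
matchings, and any group strategy-proof efficient mechanism is a dictatorship on
this subdomain. -/
theorem stmt10 (f : Profile (Fin 4) → Matching (Fin 4))
    (hG : GroupSP f) (hE : Efficient f) :
    (∀ P : Profile (Fin 4), BottomSingle P →
      ∀ μ : Matching (Fin 4), EfficientAt P μ → ∀ a, μ.1 a ≠ a) ∧
    Nat.card {μ : Matching (Fin 4) // ∀ a, μ.1 a ≠ a} = 3 ∧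
    (∃ i : Fin 4, ∀ P : Profile (Fin 4), BottomSingle P → TopChoice (P i) ((f P).1 i)) := by

  refine ⟨GS10.part1, ?_, ?_⟩
  · rw [Nat.card_eq_fintype_card]; decide
  · obtain ⟨i, hi⟩ := GS10.abstract_dict (GS10.gFun f) (GS10.Ps f hE) (GS10.Gs f hG hE)
    refine ⟨i, fun P hBP => ?_⟩
    obtain ⟨Q, rfl⟩ := GS10.canon P hBP
    intro c hc
    have h1 := congrFun (GS10.hperf f hE Q) i
    show GS10.score i (Q i) ((f (GS10.mkProf Q)).1 i) < GS10.score i (Q i) c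
    rw [h1] at hc ⊢
    exact GS10.toplem i (Q i) (GS10.gFun f Q) c (hi Q) hc
end

section
/- For any gender-neutral two-sided matching mechanism f with symmetry σ(m_i) = w_i, the induced one-sided mechanism g is group strategy-proof whenever f is group strategy-proof. -/
abbrev Profile2 (n : ℕ) := (Fin n → Pref (Fin n)) × (Fin n → Pref (Fin n))
abbrev Mechanism2 (n : ℕ) := Profile2 n → (Fin n ≃ Fin n)

/-- Weak gender-neutrality with respect to σ(m_i) = w_i: reflecting the profile
reflects the outcome. -/
def WeaklyGN {n : ℕ} (f : Mechanism2 n) : Prop :=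
  ∀ P : Profile2 n, f (P.2, P.1) = (f P).symm

/-- `ν` Pareto dominates `μ` at the two-sided profile `P`. -/
def dominates2 {n : ℕ} (P : Profile2 n) (ν μ : Fin n ≃ Fin n) : Prop :=
  (∀ i, ν i = μ i ∨ (P.1 i).1 (ν i) (μ i)) ∧
  (∀ j, ν.symm j = μ.symm j ∨ (P.2 j).1 (ν.symm j) (μ.symm j)) ∧
  ((∃ i, (P.1 i).1 (ν i) (μ i)) ∨ (∃ j, (P.2 j).1 (ν.symm j) (μ.symm j)))

/-- Two-sided efficiency. -/
def Efficient2 {n : ℕ} (f : Mechanism2 n) : Prop :=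
  ∀ P, ¬ ∃ ν : Fin n ≃ Fin n, dominates2 P ν (f P)

/-- Two-sided group strategy-proofness: no coalition (of men `Sm` and women `Sw`)
has a misreport making all members weakly better off and some member strictly. -/
def GroupSP2 {n : ℕ} (f : Mechanism2 n) : Prop :=
  ¬ ∃ (P P' : Profile2 n) (Sm Sw : Set (Fin n)),
      (∀ i, i ∉ Sm → P'.1 i = P.1 i) ∧ (∀ j, j ∉ Sw → P'.2 j = P.2 j) ∧
      (∀ i ∈ Sm, f P' i = f P i ∨ (P.1 i).1 (f P' i) (f P i)) ∧
      (∀ j ∈ Sw, (f P').symm j = (f P).symm j ∨ (P.2 j).1 ((f P').symm j) ((f P).symm j)) ∧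
      ((∃ i ∈ Sm, (P.1 i).1 (f P' i) (f P i)) ∨
        (∃ j ∈ Sw, (P.2 j).1 ((f P').symm j) ((f P).symm j)))

/-- If `f` is weakly gender-neutral and group strategy-proof, the induced one-sided
mechanism `g Q := (j ↦ f (Q, Q) j)` is group strategy-proof: no coalition `S` of
indices has a profitable joint misreport. -/
theorem stmt12 {n : ℕ} (f : Mechanism2 n) (hgn : WeaklyGN f) (hG : GroupSP2 f) :
    ¬ ∃ (Q Q' : Fin n → Pref (Fin n)) (S : Set (Fin n)),
        (∀ j, j ∉ S → Q' j = Q j) ∧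
        (∀ j ∈ S, f (Q', Q') j = f (Q, Q) j ∨ (Q j).1 (f (Q', Q') j) (f (Q, Q) j)) ∧
        (∃ j ∈ S, (Q j).1 (f (Q', Q') j) (f (Q, Q) j)) := by
  rintro ⟨Q, Q', S, hout, hweak, j0, hj0, hstr⟩
  have h1 : f (Q, Q) = (f (Q, Q)).symm := hgn (Q, Q)
  have h2 : f (Q', Q') = (f (Q', Q')).symm := hgn (Q', Q')
  have e1 : ∀ j, (f (Q, Q)).symm j = f (Q, Q) j := fun j => by rw [← h1]
  have e2 : ∀ j, (f (Q', Q')).symm j = f (Q', Q') j := fun j => by rw [← h2]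
  exact hG ⟨(Q, Q), (Q', Q'), S, S,
    fun i hi => hout i hi, fun j hj => hout j hj,
    hweak,
    fun j hj => by rw [e1, e2]; exact hweak j hj,
    Or.inl ⟨j0, hj0, hstr⟩⟩
end

section
/- No stable two-sided matching mechanism for three or more couples is weakly gender-neutral: for any symmetry σ there exists a symmetric preference profile at which no stable matching is symmetric. -/
/-- `μ` is stable at `P`: there is no blocking pair `(m_i, w_j)` with
`w_j ≻_{m_i} μ(m_i)` and `m_i ≻_{w_j} μ(w_j)`. -/
def Stable {n : ℕ} (P : Profile2 n) (μ : Fin n ≃ Fin n) : Prop :=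
  ¬ ∃ i j, (P.1 i).1 j (μ i) ∧ (P.2 j).1 i (μ.symm j)

def rk {n : ℕ} (i j : Fin n) : ℕ :=
  if i.val < 3 ∧ j.val < 3 then (i.val + 2 - j.val) % 3
  else if j = i then 0 else j.val + 3

lemma rk_inj {n : ℕ} (i : Fin n) : Function.Injective (rk i) := by
  intro a b h
  unfold rk at h
  split_ifs at h <;> exact Fin.ext (by omega)

lemma rk_small {n : ℕ} (i j : Fin n) (hi : i.val < 3) (hj : j.val < 3) :
    rk i j = (i.val + 2 - j.val) % 3 := if_pos ⟨hi, hj⟩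

def pref {n : ℕ} (i : Fin n) : Pref (Fin n) :=
  ⟨fun a b => rk i a < rk i b,
   { irrefl := fun a => lt_irrefl _
     trans := fun _ _ _ => Nat.lt_trans
     trichotomous := fun a b => by
       rcases Nat.lt_trichotomy (rk i a) (rk i b) with h | h | h
       · exact fun h1 _ => absurd h h1
       · exact fun _ _ => rk_inj i h
       · exact fun _ h2 => absurd h h2 }⟩

/-- No stable two-sided matching mechanism for three or more couples is weakly
gender-neutral. -/
theorem stmt14 {n : ℕ} (hn : 3 ≤ n) (f : Mechanism2 n)
    (hst : ∀ P, Stable P (f P)) : ¬ WeaklyGN f := by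
  intro hGN
  set μ := f ((pref, pref) : Profile2 n) with hμ
  have hsym : μ = μ.symm := hGN ((pref, pref) : Profile2 n)
  have hs := hst ((pref, pref) : Profile2 n)
  have hsymap : ∀ j, μ.symm j = μ j := fun j => by rw [← hsym]
  have hinvol : ∀ i, μ (μ i) = i := fun i => by
    rw [← hsymap]; exact μ.symm_apply_apply i
  have hnb : ∀ i j : Fin n, rk i j < rk i (μ i) → rk j i < rk j (μ j) → False := by
    intro i j h1 h2
    exact hs ⟨i, j, h1, by show rk j i < rk j (μ.symm j); rw [hsymap]; exact h2⟩
  -- indices ≥ 3 are fixed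
  have hfix : ∀ i : Fin n, 3 ≤ i.val → μ i = i := by
    intro i hi
    by_contra hne
    have key : rk i i < rk i (μ i) := by
      have h1 : rk i i = 0 := by unfold rk; rw [if_neg (by omega), if_pos rfl]
      have h2 : 0 < rk i (μ i) := by unfold rk; rw [if_neg (by omega), if_neg hne]; omega
      omega
    exact hnb i i key key
  have hlt3 : ∀ i : Fin n, i.val < 3 → (μ i).val < 3 := by
    intro i hi
    by_contra h
    have h2 : μ (μ i) = μ i := hfix _ (by omega)
    rw [hinvol] at h2
    rw [← h2] at h
    omega
  -- the three small indices
  set i0 : Fin n := ⟨0, by omega⟩ with hi0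
  set i1 : Fin n := ⟨1, by omega⟩ with hi1
  set i2 : Fin n := ⟨2, by omega⟩ with hi2
  have hclass : ∀ x : Fin n, x.val < 3 → x = i0 ∨ x = i1 ∨ x = i2 := by
    intro x hx
    have : x.val = 0 ∨ x.val = 1 ∨ x.val = 2 := by omega
    rcases this with h | h | h
    · exact Or.inl (Fin.ext h)
    · exact Or.inr (Or.inl (Fin.ext h))
    · exact Or.inr (Or.inr (Fin.ext h))
  have hv0 : i0.val = 0 := rfl
  have hv1 : i1.val = 1 := rfl
  have hv2 : i2.val = 2 := rfl
  have r00 : rk i0 i0 = 2 := by rw [rk_small _ _ (by omega) (by omega)]; omega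
  have r01 : rk i0 i1 = 1 := by rw [rk_small _ _ (by omega) (by omega)]; omega
  have r02 : rk i0 i2 = 0 := by rw [rk_small _ _ (by omega) (by omega)]; omega
  have r10 : rk i1 i0 = 0 := by rw [rk_small _ _ (by omega) (by omega)]; omega
  have r11 : rk i1 i1 = 2 := by rw [rk_small _ _ (by omega) (by omega)]; omega
  have r12 : rk i1 i2 = 1 := by rw [rk_small _ _ (by omega) (by omega)]; omega
  have r20 : rk i2 i0 = 1 := by rw [rk_small _ _ (by omega) (by omega)]; omega
  have r21 : rk i2 i1 = 0 := by rw [rk_small _ _ (by omega) (by omega)]; omega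
  have r22 : rk i2 i2 = 2 := by rw [rk_small _ _ (by omega) (by omega)]; omega
  rcases hclass (μ i0) (hlt3 i0 (by omega)) with h0 | h0 | h0 <;>
    rcases hclass (μ i1) (hlt3 i1 (by omega)) with h1 | h1 | h1 <;>
      rcases hclass (μ i2) (hlt3 i2 (by omega)) with h2 | h2 | h2
  -- kill non-injective combos and 3-cycles, then blocking pairs
  all_goals first
    | (exact absurd (μ.injective (h0.trans h1.symm)) (by simp [hi0, hi1, Fin.ext_iff]))
    | (exact absurd (μ.injective (h0.trans h2.symm)) (by simp [hi0, hi2, Fin.ext_iff]))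
    | (exact absurd (μ.injective (h1.trans h2.symm)) (by simp [hi1, hi2, Fin.ext_iff]))
    | (have hcy : μ (μ i0) = i2 := by rw [h0, h1]
       rw [hinvol] at hcy; exact absurd (congrArg Fin.val hcy) (by simp [hi0, hi2]))
    | (have hcy : μ (μ i0) = i1 := by rw [h0, h2]
       rw [hinvol] at hcy; exact absurd (congrArg Fin.val hcy) (by simp [hi0, hi1]))
    | (apply hnb i0 i2 <;> (simp only [h0, h1, h2, r00, r01, r02, r10, r11, r12, r20, r21, r22]; omega))
    | (apply hnb i0 i1 <;> (simp only [h0, h1, h2, r00, r01, r02, r10, r11, r12, r20, r21, r22]; omega))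
    | (apply hnb i1 i2 <;> (simp only [h0, h1, h2, r00, r01, r02, r10, r11, r12, r20, r21, r22]; omega))
    | (apply hnb i2 i0 <;> (simp only [h0, h1, h2, r00, r01, r02, r10, r11, r12, r20, r21, r22]; omega))
end

section
/- With two outcomes ν and μ and four agents, the upward-closed family Λ^ν generated by the minimal sets {{m_1},{w_1}} (i.e., ν is chosen iff at least one of m_1, w_1 prefers ν) defines a mechanism that is strategy-proof, efficient, and gender-neutral with respect to σ(m_i) = w_i. The same holds for the family generated by {{m_1,w_1}} (ν chosen iff both m_1 and w_1 prefer ν). -/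
/- The two-couple case.  Agents are `N = Fin 2 ⊕ Fin 2` (`inl i` = man m_i,
`inr i` = woman w_i); the symmetry σ(m_i) = w_i is `Sum.swap`.  There are exactly
two matchings, ν = {(m_0,w_0),(m_1,w_1)} and μ = {(m_0,w_1),(m_1,w_0)}; we encode
the outcome as a `Bool` (`true` = ν).  Each agent has exactly two possible strict
preferences, so a profile is identified with the set `S ⊆ N` of agents preferring ν,
and a mechanism is a function `f : Set N → Bool`. -/

abbrev Agents4 := Fin 2 ⊕ Fin 2

/-- Efficiency: no outcome that every agent strictly prefers to the chosen one. -/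
def Eff16 (f : Set Agents4 → Bool) : Prop :=
  ∀ S : Set Agents4, ¬ ∃ b : Bool, b ≠ f S ∧ ∀ i : Agents4, (b = true ↔ i ∈ S)

/-- Strategy-proofness: no agent, by changing only their own report, can move the
outcome to the matching they (truly) prefer. -/
def SP16 (f : Set Agents4 → Bool) : Prop :=
  ∀ (S S' : Set Agents4) (i : Agents4), (∀ j, j ≠ i → (j ∈ S' ↔ j ∈ S)) →
    ¬ (f S' ≠ f S ∧ (f S' = true ↔ i ∈ S))

/-- Gender-neutrality with respect to σ = `Sum.swap`: reflecting the profile leaves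
the outcome unchanged (both matchings are symmetric). -/
def GN16 (f : Set Agents4 → Bool) : Prop :=
  ∀ S : Set Agents4, f (Sum.swap '' S) = f S

lemma swap_mem_image (S : Set Agents4) (x : Agents4) :
    Sum.swap x ∈ Sum.swap '' S ↔ x ∈ S :=
  (Function.LeftInverse.injective (fun y : Agents4 => Sum.swap_swap y)).mem_set_image

lemma memswap_l (S : Set Agents4) :
    (Sum.inl 0 : Agents4) ∈ Sum.swap '' S ↔ (Sum.inr 0 : Agents4) ∈ S :=
  swap_mem_image S (Sum.inr 0)

lemma memswap_r (S : Set Agents4) :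
    (Sum.inr 0 : Agents4) ∈ Sum.swap '' S ↔ (Sum.inl 0 : Agents4) ∈ S :=
  swap_mem_image S (Sum.inl 0)

/-- The matched-by-default mechanism (ν chosen iff m_0 or w_0 prefers ν, i.e. the
family generated by the minimal sets {{m_0},{w_0}}) and the unmatched-by-default
mechanism (ν chosen iff both m_0 and w_0 prefer ν, generated by {{m_0,w_0}}) are
both strategy-proof, efficient, and gender-neutral. -/
theorem stmt17 :
    (∀ f : Set Agents4 → Bool,
      (∀ S, f S = true ↔ (Sum.inl 0 ∈ S ∨ Sum.inr 0 ∈ S)) →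
      SP16 f ∧ Eff16 f ∧ GN16 f) ∧
    (∀ f : Set Agents4 → Bool,
      (∀ S, f S = true ↔ (Sum.inl 0 ∈ S ∧ Sum.inr 0 ∈ S)) →
      SP16 f ∧ Eff16 f ∧ GN16 f) := by

  constructor
  · intro f hf
    refine ⟨?_, ?_, ?_⟩
    · intro S S' i h hc
      obtain ⟨hne, htr⟩ := hc
      have hm := hf S
      have hm' := hf S'
      by_cases h0 : i = Sum.inl 0
      · subst h0
        have hw : (Sum.inr 0 : Agents4) ∈ S' ↔ (Sum.inr 0 : Agents4) ∈ S :=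
          h _ (by simp)
        cases hb : f S' <;> cases ha : f S <;> simp_all
      · by_cases h1 : i = Sum.inr 0
        · subst h1
          have hw : (Sum.inl 0 : Agents4) ∈ S' ↔ (Sum.inl 0 : Agents4) ∈ S :=
            h _ (by simp)
          cases hb : f S' <;> cases ha : f S <;> simp_all
        · have hw1 : (Sum.inl 0 : Agents4) ∈ S' ↔ (Sum.inl 0 : Agents4) ∈ S :=
            h _ (fun he => h0 he.symm)
          have hw2 : (Sum.inr 0 : Agents4) ∈ S' ↔ (Sum.inr 0 : Agents4) ∈ S :=
            h _ (fun he => h1 he.symm)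
          cases hb : f S' <;> cases ha : f S <;> simp_all
    · intro S hc
      obtain ⟨b, hb, hall⟩ := hc
      have hm := hf S
      have h1 := hall (Sum.inl 0)
      have h2 := hall (Sum.inr 0)
      cases b <;> cases ha : f S <;> simp_all
    · intro S
      have hm := hf S
      have hm' := hf (Sum.swap '' S)
      have e1 := memswap_l S
      have e2 := memswap_r S
      cases hb : f (Sum.swap '' S) <;> cases ha : f S <;> simp_all
  · intro f hf
    refine ⟨?_, ?_, ?_⟩
    · intro S S' i h hc
      obtain ⟨hne, htr⟩ := hc
      have hm := hf S
      have hm' := hf S'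
      by_cases h0 : i = Sum.inl 0
      · subst h0
        have hw : (Sum.inr 0 : Agents4) ∈ S' ↔ (Sum.inr 0 : Agents4) ∈ S :=
          h _ (by simp)
        cases hb : f S' <;> cases ha : f S <;> simp_all
      · by_cases h1 : i = Sum.inr 0
        · subst h1
          have hw : (Sum.inl 0 : Agents4) ∈ S' ↔ (Sum.inl 0 : Agents4) ∈ S :=
            h _ (by simp)
          cases hb : f S' <;> cases ha : f S <;> simp_all
        · have hw1 : (Sum.inl 0 : Agents4) ∈ S' ↔ (Sum.inl 0 : Agents4) ∈ S :=
            h _ (fun he => h0 he.symm)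
          have hw2 : (Sum.inr 0 : Agents4) ∈ S' ↔ (Sum.inr 0 : Agents4) ∈ S :=
            h _ (fun he => h1 he.symm)
          cases hb : f S' <;> cases ha : f S <;> simp_all
    · intro S hc
      obtain ⟨b, hb, hall⟩ := hc
      have hm := hf S
      have h1 := hall (Sum.inl 0)
      have h2 := hall (Sum.inr 0)
      cases b <;> cases ha : f S <;> simp_all
    · intro S
      have hm := hf S
      have hm' := hf (Sum.swap '' S)
      have e1 := memswap_l S
      have e2 := memswap_r S
      cases hb : f (Sum.swap '' S) <;> cases ha : f S <;> simp_all
end
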